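/- arXiv:1409.4076 — 5 statements merged into one kernel-verified Lean document; each statement's English description precedes it below -/
import Mathlib

section
/- Let $1<p<\infty$, $0<\alpha<n/p$, and $\sigma$ a nonnegative locally finite Borel measure on $\mathbb{R}^n$ with $\int_1^\infty (\sigma(B(0,r))/r^{n-\alpha p})^{1/(p-1)}\,dr/r<\infty$. Then $\liminf_{|x|\to\infty}\mathbf{W}_{\alpha,p}\sigma(x)=0$. -/
open MeasureTheory ENNReal Metric Set Filter

section helpers

lemma tail_small {f : ℝ → ℝ≥0∞}
    (hfin : ∫⁻ r in Set.Ioi (1:ℝ), f r ≠ ⊤) {δ : ℝ≥0∞} (hδ : δ ≠ 0) :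
    ∃ R₀ : ℝ, 1 ≤ R₀ ∧ ∫⁻ r in Set.Ioi R₀, f r < δ := by
  set μ' : Measure ℝ := (volume.restrict (Set.Ioi (1:ℝ))).withDensity f with hμ'
  have happ : ∀ R : ℝ, 1 ≤ R → μ' (Set.Ioi R) = ∫⁻ r in Set.Ioi R, f r := by
    intro R hR
    rw [hμ', withDensity_apply _ measurableSet_Ioi, Measure.restrict_restrict measurableSet_Ioi]
    congr 1
    rw [Set.Ioi_inter_Ioi, sup_of_le_left hR]
  have hiInter : ⋂ k : ℕ, Set.Ioi ((k : ℝ) + 1) = (∅ : Set ℝ) := by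
    ext x
    simp only [Set.mem_iInter, Set.mem_Ioi, Set.mem_empty_iff_false, iff_false, not_forall, not_lt]
    obtain ⟨k, hk⟩ := exists_nat_gt x
    exact ⟨k, le_of_lt (by linarith)⟩
  have htend : Tendsto (fun k : ℕ => μ' (Set.Ioi ((k:ℝ) + 1))) atTop (nhds 0) := by
    have := tendsto_measure_iInter_atTop (μ := μ') (s := fun k : ℕ => Set.Ioi ((k:ℝ)+1))
      (fun k => measurableSet_Ioi.nullMeasurableSet)
      (fun i j hij => Set.Ioi_subset_Ioi (by exact_mod_cast by simpa using (by exact_mod_cast hij : (i:ℝ) ≤ j)))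
      ⟨0, by simp only [Nat.cast_zero, zero_add]; rw [happ 1 le_rfl]; exact hfin⟩
    rw [hiInter] at this
    simpa [Function.comp_def] using this
  have := (htend.eventually_lt_const (by exact hδ.bot_lt : (0:ℝ≥0∞) < δ)).exists
  obtain ⟨k, hk⟩ := this
  refine ⟨(k:ℝ)+1, by linarith [Nat.cast_nonneg (α := ℝ) k], ?_⟩
  rwa [← happ _ (by linarith [Nat.cast_nonneg (α := ℝ) k])]

lemma scale3 {f : ℝ → ℝ≥0∞} (hf : Measurable f) (R : ℝ) :
    ∫⁻ r in Set.Ioi R, f (3*r) = ENNReal.ofReal 3⁻¹ * ∫⁻ s in Set.Ioi (3*R), f s := by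
  have hind : (Set.Ioi R).indicator (fun r => f (3*r)) =
      fun r => ((Set.Ioi (3*R)).indicator f) (3*r) := by
    funext r
    by_cases h : r ∈ Set.Ioi R
    · rw [Set.indicator_of_mem h, Set.indicator_of_mem (by simp only [Set.mem_Ioi] at h ⊢; linarith)]
    · rw [Set.indicator_of_notMem h, Set.indicator_of_notMem (by
        simp only [Set.mem_Ioi] at h ⊢; intro hc; apply h; linarith)]
  rw [← lintegral_indicator measurableSet_Ioi, hind]
  have hmeas : Measurable ((Set.Ioi (3*R)).indicator f) := hf.indicator measurableSet_Ioi
  calc ∫⁻ r, ((Set.Ioi (3*R)).indicator f) (3*r)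
      = ∫⁻ y, ((Set.Ioi (3*R)).indicator f) y ∂(Measure.map (fun r : ℝ => 3*r) volume) := by
        rw [lintegral_map hmeas (measurable_const_mul 3)]
    _ = ENNReal.ofReal 3⁻¹ * ∫⁻ s in Set.Ioi (3*R), f s := by
        rw [Real.map_volume_mul_left (by norm_num : (3:ℝ) ≠ 0)]
        simp only [abs_of_pos (by norm_num : (0:ℝ) < 3⁻¹), lintegral_smul_measure]
        rw [lintegral_indicator measurableSet_Ioi, smul_eq_mul]

variable {n : ℕ}

lemma ball_pair_measurable (r : ℝ) :
    MeasurableSet {p : EuclideanSpace ℝ (Fin n) × EuclideanSpace ℝ (Fin n) | dist p.2 p.1 < r} :=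
  (isOpen_lt (continuous_dist.comp (continuous_snd.prodMk continuous_fst)) continuous_const).measurableSet

lemma sigma_ball_eq_lintegral (σ : Measure (EuclideanSpace ℝ (Fin n))) (x : EuclideanSpace ℝ (Fin n)) (r : ℝ) :
    σ (Metric.ball x r) =
      ∫⁻ y, ({p : EuclideanSpace ℝ (Fin n) × EuclideanSpace ℝ (Fin n) | dist p.2 p.1 < r}).indicator 1 (x, y) ∂σ := by
  have h : (fun y => ({p : EuclideanSpace ℝ (Fin n) × EuclideanSpace ℝ (Fin n) | dist p.2 p.1 < r}).indicator 1 (x, y))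
      = (Metric.ball x r).indicator (1 : EuclideanSpace ℝ (Fin n) → ℝ≥0∞) := by
    funext y
    by_cases hy : y ∈ Metric.ball x r
    · rw [Set.indicator_of_mem (by simpa [Metric.mem_ball] using hy), Set.indicator_of_mem hy]; rfl
    · rw [Set.indicator_of_notMem (by simpa [Metric.mem_ball] using hy), Set.indicator_of_notMem hy]
  rw [h, lintegral_indicator_one measurableSet_ball]

lemma meas_ball_fun (σ : Measure (EuclideanSpace ℝ (Fin n))) [SFinite σ] (r : ℝ) :
    Measurable fun x : EuclideanSpace ℝ (Fin n) => σ (Metric.ball x r) := by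
  have : (fun x : EuclideanSpace ℝ (Fin n) => σ (Metric.ball x r)) =
      fun x => ∫⁻ y, ({p : EuclideanSpace ℝ (Fin n) × EuclideanSpace ℝ (Fin n) | dist p.2 p.1 < r}).indicator 1 (x, y) ∂σ := by
    funext x; exact sigma_ball_eq_lintegral σ x r
  rw [this]
  exact Measurable.lintegral_prod_right' ((measurable_one.indicator (ball_pair_measurable r)))

lemma avg_bound (hn : 0 < n) (σ : Measure (EuclideanSpace ℝ (Fin n))) [SFinite σ] {R r : ℝ}
    (hr : 0 < r) (hrR : r ≤ R) :
    ∫⁻ x in (Metric.ball (0:EuclideanSpace ℝ (Fin n)) (2*R) \ Metric.closedBall 0 R),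
        σ (Metric.ball x r) ∂volume
      ≤ ENNReal.ofReal (r ^ n) * volume (Metric.ball (0:EuclideanSpace ℝ (Fin n)) 1)
          * σ (Metric.ball (0:EuclideanSpace ℝ (Fin n)) (4*R)) := by
  haveI : Nonempty (Fin n) := ⟨⟨0, hn⟩⟩
  set S := {p : EuclideanSpace ℝ (Fin n) × EuclideanSpace ℝ (Fin n) | dist p.2 p.1 < r} with hS
  set A := Metric.ball (0:EuclideanSpace ℝ (Fin n)) (2*R) \ Metric.closedBall 0 R with hA
  have hAm : MeasurableSet A := measurableSet_ball.diff measurableSet_closedBall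
  have step1 : ∫⁻ x in A, σ (Metric.ball x r) ∂volume
      = ∫⁻ y, ∫⁻ x in A, S.indicator 1 (x, y) ∂volume ∂σ := by
    rw [← lintegral_lintegral_swap]
    · exact lintegral_congr fun x => sigma_ball_eq_lintegral σ x r
    · exact ((measurable_one.indicator (ball_pair_measurable r)).comp
        (measurable_fst.prodMk measurable_snd)).aemeasurable
  rw [step1]
  have step2 : ∀ y, ∫⁻ x in A, S.indicator 1 (x, y) ∂volume = volume (Metric.ball y r ∩ A) := by
    intro y
    have h : (fun x => S.indicator 1 (x, y)) = (Metric.ball y r).indicator (1 : EuclideanSpace ℝ (Fin n) → ℝ≥0∞) := by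
      funext x
      by_cases hx : x ∈ Metric.ball y r
      · rw [Set.indicator_of_mem (by simpa [hS, Metric.mem_ball, dist_comm] using hx), Set.indicator_of_mem hx]; rfl
      · rw [Set.indicator_of_notMem (by simpa [hS, Metric.mem_ball, dist_comm] using hx), Set.indicator_of_notMem hx]
    rw [h, lintegral_indicator_one measurableSet_ball, Measure.restrict_apply measurableSet_ball]
  calc ∫⁻ y, ∫⁻ x in A, S.indicator 1 (x, y) ∂volume ∂σ
      = ∫⁻ y, volume (Metric.ball y r ∩ A) ∂σ := lintegral_congr step2
    _ ≤ ∫⁻ y, (Metric.ball (0:EuclideanSpace ℝ (Fin n)) (4*R)).indicator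
          (fun _ => ENNReal.ofReal (r ^ n) * volume (Metric.ball (0:EuclideanSpace ℝ (Fin n)) 1)) y ∂σ := by
        apply lintegral_mono
        intro y
        by_cases hy : y ∈ Metric.ball (0:EuclideanSpace ℝ (Fin n)) (4*R)
        · rw [Set.indicator_of_mem hy]
          calc volume (Metric.ball y r ∩ A) ≤ volume (Metric.ball y r) := measure_mono Set.inter_subset_left
            _ = ENNReal.ofReal (r ^ n) * volume (Metric.ball (0:EuclideanSpace ℝ (Fin n)) 1) := by
                rw [Measure.addHaar_ball _ _ hr.le, finrank_euclideanSpace_fin]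
        · rw [Set.indicator_of_notMem hy]
          have : Metric.ball y r ∩ A = ∅ := by
            ext x
            simp only [Set.mem_inter_iff, Set.mem_empty_iff_false, iff_false, not_and]
            intro hx hxA
            apply hy
            have h1 : dist x y < r := Metric.mem_ball.mp hx
            have h2 : ‖x‖ < 2*R := by
              have := hxA.1
              rwa [mem_ball_zero_iff] at this
            rw [mem_ball_zero_iff]
            calc ‖y‖ ≤ dist x y + ‖x‖ := by
                  rw [dist_eq_norm]
                  have h3 : ‖y‖ - ‖x‖ ≤ ‖x - y‖ := by
                    rw [norm_sub_rev]; exact norm_sub_norm_le y x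
                  linarith
              _ < r + 2*R := by linarith
              _ ≤ 4*R := by linarith
          simp [this]
    _ = ENNReal.ofReal (r ^ n) * volume (Metric.ball (0:EuclideanSpace ℝ (Fin n)) 1)
          * σ (Metric.ball (0:EuclideanSpace ℝ (Fin n)) (4*R)) := by
        rw [lintegral_indicator_const measurableSet_ball]

lemma integrand_meas (σ : Measure (EuclideanSpace ℝ (Fin n))) (x : EuclideanSpace ℝ (Fin n))
    (m c q : ℝ) (hm : 0 ≤ m) :
    Measurable fun r : ℝ =>
      (σ (Metric.ball x (m*r)) / ENNReal.ofReal (r ^ c)) ^ q / ENNReal.ofReal r := by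
  have h1 : Measurable fun r : ℝ => σ (Metric.ball x (m*r)) :=
    Monotone.measurable (fun a b hab => measure_mono (Metric.ball_subset_ball (by nlinarith)))
  have h2 : Measurable fun r : ℝ => ENNReal.ofReal (r ^ c) :=
    (measurable_id.pow_const c).ennreal_ofReal
  exact (((h1.div h2).pow measurable_const).div measurable_id.ennreal_ofReal)

lemma good_point (hn : 0 < n) (σ : Measure (EuclideanSpace ℝ (Fin n))) [SFinite σ]
    [IsLocallyFiniteMeasure σ] {R : ℝ} (hR : 0 < R) (w : ℕ → ℝ) (hw : ∀ j, 0 < w j)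
    (hsummable : Summable (fun j => (R * (2⁻¹:ℝ)^j)^n / w j))
    (htsum : (∑' j, (R * (2⁻¹:ℝ)^j)^n / w j) < ((2:ℝ)^n - 1) * R^n) :
    ∃ x : EuclideanSpace ℝ (Fin n), x ∈ Metric.ball (0:EuclideanSpace ℝ (Fin n)) (2*R) \ Metric.closedBall 0 R ∧
      ∀ j : ℕ, σ (Metric.ball x (R * (2⁻¹:ℝ)^j)) ≤
        ENNReal.ofReal (w j) * σ (Metric.ball (0:EuclideanSpace ℝ (Fin n)) (4*R)) := by
  haveI : Nonempty (Fin n) := ⟨⟨0, hn⟩⟩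
  haveI : Nontrivial (EuclideanSpace ℝ (Fin n)) := inferInstance
  set E := EuclideanSpace ℝ (Fin n)
  set S := σ (Metric.ball (0:E) (4*R)) with hSdef
  set A := Metric.ball (0:E) (2*R) \ Metric.closedBall 0 R with hAdef
  have hrj : ∀ j : ℕ, 0 < R * (2⁻¹:ℝ)^j := fun j => mul_pos hR (pow_pos (by norm_num) j)
  have hrjR : ∀ j : ℕ, R * (2⁻¹:ℝ)^j ≤ R := by
    intro j
    have : (2⁻¹:ℝ)^j ≤ 1 := pow_le_one₀ (by norm_num) (by norm_num)
    nlinarith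
  by_cases hS0 : S = 0
  · -- trivial case: pick an explicit point
    refine ⟨EuclideanSpace.single ⟨0, hn⟩ ((3/2)*R), ?_, ?_⟩
    · constructor
      · rw [mem_ball_zero_iff, EuclideanSpace.norm_single, Real.norm_eq_abs, abs_of_pos (by linarith)]; linarith
      · rw [Metric.mem_closedBall, dist_zero_right, EuclideanSpace.norm_single, Real.norm_eq_abs,
          abs_of_pos (by linarith)]
        push_neg; linarith
    · intro j
      have hsub : Metric.ball (EuclideanSpace.single (⟨0, hn⟩ : Fin n) ((3/2)*R)) (R * (2⁻¹:ℝ)^j)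
          ⊆ Metric.ball (0:E) (4*R) := by
        intro y hy
        rw [mem_ball_zero_iff]
        rw [Metric.mem_ball] at hy
        have h1 : ‖y‖ ≤ dist y (EuclideanSpace.single (⟨0, hn⟩ : Fin n) ((3/2)*R)) +
            ‖EuclideanSpace.single (⟨0, hn⟩ : Fin n) ((3/2)*R)‖ := by
          rw [dist_eq_norm]
          have := norm_sub_norm_le y (EuclideanSpace.single (⟨0, hn⟩ : Fin n) ((3/2)*R))
          linarith [norm_sub_norm_le y (EuclideanSpace.single (⟨0, hn⟩ : Fin n) ((3/2)*R))]
        rw [EuclideanSpace.norm_single, Real.norm_eq_abs, abs_of_pos (by linarith)] at h1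
        have := hrjR j
        linarith
      have : σ (Metric.ball (EuclideanSpace.single (⟨0, hn⟩ : Fin n) ((3/2)*R)) (R * (2⁻¹:ℝ)^j)) ≤ S :=
        measure_mono hsub
      rw [hS0] at this
      simp only [le_zero_iff] at this
      rw [this, hS0]
      simp
  · -- main case
    have hSt : S ≠ ⊤ := measure_ball_lt_top.ne
    set v := volume (Metric.ball (0:E) 1) with hvdef
    have hv0 : v ≠ 0 := (measure_ball_pos _ _ one_pos).ne'
    have hvt : v ≠ ⊤ := measure_ball_lt_top.ne
    have hAm : MeasurableSet A := measurableSet_ball.diff measurableSet_closedBall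
    by_contra hcon
    push_neg at hcon
    have hsub : A ⊆ ⋃ j : ℕ, ({x : E | ENNReal.ofReal (w j) * S ≤ σ (Metric.ball x (R * (2⁻¹:ℝ)^j))} ∩ A) := by
      intro x hx
      obtain ⟨j, hj⟩ := hcon x hx
      exact Set.mem_iUnion.mpr ⟨j, ⟨le_of_lt hj, hx⟩⟩
    have hbound : ∀ j : ℕ, volume ({x : E | ENNReal.ofReal (w j) * S ≤ σ (Metric.ball x (R * (2⁻¹:ℝ)^j))} ∩ A)
        ≤ v * ENNReal.ofReal ((R * (2⁻¹:ℝ)^j)^n / w j) := by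
      intro j
      have hEm : MeasurableSet {x : E | ENNReal.ofReal (w j) * S ≤ σ (Metric.ball x (R * (2⁻¹:ℝ)^j))} :=
        measurableSet_le measurable_const (meas_ball_fun σ _)
      have h1 : volume ({x : E | ENNReal.ofReal (w j) * S ≤ σ (Metric.ball x (R * (2⁻¹:ℝ)^j))} ∩ A)
          = (volume.restrict A) {x : E | ENNReal.ofReal (w j) * S ≤ σ (Metric.ball x (R * (2⁻¹:ℝ)^j))} := by
        rw [Measure.restrict_apply hEm]
      rw [h1]
      have hne0 : ENNReal.ofReal (w j) * S ≠ 0 := by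
        exact mul_ne_zero (ENNReal.ofReal_pos.mpr (hw j)).ne' hS0
      have hnetop : ENNReal.ofReal (w j) * S ≠ ⊤ :=
        ENNReal.mul_ne_top ENNReal.ofReal_ne_top hSt
      calc (volume.restrict A) {x : E | ENNReal.ofReal (w j) * S ≤ σ (Metric.ball x (R * (2⁻¹:ℝ)^j))}
          ≤ (∫⁻ x in A, σ (Metric.ball x (R * (2⁻¹:ℝ)^j)) ∂volume) / (ENNReal.ofReal (w j) * S) :=
            meas_ge_le_lintegral_div (meas_ball_fun σ _).aemeasurable hne0 hnetop
        _ ≤ (ENNReal.ofReal ((R * (2⁻¹:ℝ)^j)^n) * v * S) / (ENNReal.ofReal (w j) * S) := by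
            apply ENNReal.div_le_div_right
            exact avg_bound hn σ (hrj j) (hrjR j)
        _ = (ENNReal.ofReal ((R * (2⁻¹:ℝ)^j)^n) * v) / ENNReal.ofReal (w j) := by
            rw [mul_assoc, ← mul_assoc (ENNReal.ofReal ((R * (2⁻¹:ℝ)^j)^n)) v S]
            exact ENNReal.mul_div_mul_right _ _ hS0 hSt
        _ = v * ENNReal.ofReal ((R * (2⁻¹:ℝ)^j)^n / w j) := by
            rw [mul_comm (ENNReal.ofReal ((R * (2⁻¹:ℝ)^j)^n)) v, mul_div_assoc,
              ENNReal.ofReal_div_of_pos (hw j)]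
    have hA_le : volume A ≤ v * ENNReal.ofReal (∑' j, (R * (2⁻¹:ℝ)^j)^n / w j) := by
      calc volume A ≤ ∑' j : ℕ, volume ({x : E | ENNReal.ofReal (w j) * S ≤ σ (Metric.ball x (R * (2⁻¹:ℝ)^j))} ∩ A) :=
            (measure_mono hsub).trans (measure_iUnion_le _)
        _ ≤ ∑' j : ℕ, v * ENNReal.ofReal ((R * (2⁻¹:ℝ)^j)^n / w j) := ENNReal.tsum_le_tsum hbound
        _ = v * ∑' j : ℕ, ENNReal.ofReal ((R * (2⁻¹:ℝ)^j)^n / w j) := ENNReal.tsum_mul_left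
        _ = v * ENNReal.ofReal (∑' j, (R * (2⁻¹:ℝ)^j)^n / w j) := by
            rw [ENNReal.ofReal_tsum_of_nonneg (fun j => div_nonneg (by positivity) (hw j).le) hsummable]
    have hA_ge : v * ENNReal.ofReal (((2:ℝ)^n - 1) * R^n) ≤ volume A := by
      have hdiff : volume A = volume (Metric.ball (0:E) (2*R)) - volume (Metric.closedBall (0:E) R) := by
        rw [hAdef]
        exact measure_diff (closedBall_subset_ball (by linarith)) measurableSet_closedBall.nullMeasurableSet
          measure_closedBall_lt_top.ne
      have hball : volume (Metric.ball (0:E) (2*R)) = ENNReal.ofReal ((2*R)^n) * v := by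
        rw [hvdef, Measure.addHaar_ball _ _ (by linarith : (0:ℝ) ≤ 2*R), finrank_euclideanSpace_fin]
      have hcb : volume (Metric.closedBall (0:E) R) = ENNReal.ofReal (R^n) * v := by
        rw [hvdef, Measure.addHaar_closedBall _ _ hR.le, finrank_euclideanSpace_fin]
      have hsplit : ENNReal.ofReal ((2*R)^n) * v
          = ENNReal.ofReal (((2:ℝ)^n - 1) * R^n) * v + ENNReal.ofReal (R^n) * v := by
        rw [← add_mul, ← ENNReal.ofReal_add (by nlinarith [one_lt_pow₀ (by norm_num : (1:ℝ) < 2) hn.ne', pow_pos hR n]) (by positivity)]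
        congr 2
        rw [mul_pow]; ring
      rw [hdiff, hball, hcb, hsplit,
        ENNReal.add_sub_cancel_right (ENNReal.mul_ne_top ENNReal.ofReal_ne_top hvt), mul_comm]
    have hlt : v * ENNReal.ofReal (∑' j, (R * (2⁻¹:ℝ)^j)^n / w j)
        < v * ENNReal.ofReal (((2:ℝ)^n - 1) * R^n) := by
      rw [ENNReal.mul_lt_mul_iff_right hv0 hvt]
      rw [ENNReal.ofReal_lt_ofReal_iff (by nlinarith [one_lt_pow₀ (by norm_num : (1:ℝ) < 2) hn.ne', pow_pos hR n])]
      exact htsum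
    exact absurd ((hA_ge.trans hA_le).trans_lt hlt) (lt_irrefl _)

lemma ennreal_scale_div (X : ℝ≥0∞) {a b : ℝ} (ha : 0 < a) (hb : 0 < b) :
    X / ENNReal.ofReal b = ENNReal.ofReal a * (X / ENNReal.ofReal (a*b)) := by
  rw [ENNReal.ofReal_mul ha.le, ← mul_div_assoc,
    ENNReal.mul_div_mul_left _ _ (ENNReal.ofReal_pos.mpr ha).ne' ENNReal.ofReal_ne_top]

end helpers

noncomputable def wolffTail (n : ℕ) (p α : ℝ)
    (σ : Measure (EuclideanSpace ℝ (Fin n))) (x : EuclideanSpace ℝ (Fin n)) (R : ℝ) : ℝ≥0∞ :=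
  ∫⁻ r in Set.Ioi R,
    (σ (Metric.ball x r) / ENNReal.ofReal (r ^ ((n : ℝ) - α * p))) ^ (1 / (p - 1))
      / ENNReal.ofReal r

noncomputable def wolff (n : ℕ) (p α : ℝ)
    (σ : Measure (EuclideanSpace ℝ (Fin n))) (x : EuclideanSpace ℝ (Fin n)) : ℝ≥0∞ :=
  wolffTail n p α σ x 0

set_option maxHeartbeats 2000000 in
theorem wolff_liminf_zero_at_infinity (n : ℕ) (p α : ℝ) (hp : 1 < p)
    (hα0 : 0 < α) (hα : α < n / p)
    (σ : Measure (EuclideanSpace ℝ (Fin n))) [IsLocallyFiniteMeasure σ]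
    (h : wolffTail n p α σ 0 1 ≠ ⊤) :
    Filter.liminf (fun x => wolff n p α σ x)
      (Filter.cocompact (EuclideanSpace ℝ (Fin n))) = 0 := by
  have hp0 : (0:ℝ) < p := lt_trans one_pos hp
  have hnR : (0:ℝ) < n := by
    have h1 : (0:ℝ) < (n:ℝ)/p := lt_trans hα0 hα
    have h2 := mul_pos h1 hp0
    rwa [div_mul_cancel₀ _ (ne_of_gt hp0)] at h2
  have hn : 0 < n := by exact_mod_cast hnR
  have main : ∀ ε : ℝ≥0∞, ε ≠ 0 → ∀ M : ℝ, ∃ x : EuclideanSpace ℝ (Fin n),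
      M < ‖x‖ ∧ wolff n p α σ x ≤ ε := by
    intro ε hε M
    haveI : Nonempty (Fin n) := ⟨⟨0, hn⟩⟩
    have hp1 : (0:ℝ) < p - 1 := by linarith
    set q := 1 / (p - 1) with hqdef
    have hq0 : 0 < q := by rw [hqdef]; positivity
    set c := (n:ℝ) - α * p with hcdef
    have hc0 : 0 < c := by
      have h1 : α * p < (n:ℝ) := (lt_div_iff₀ hp0).mp hα
      rw [hcdef]; linarith
    set g : ℝ → ℝ≥0∞ := fun r =>
      (σ (Metric.ball 0 r) / ENNReal.ofReal (r ^ c)) ^ q / ENNReal.ofReal r with hgdef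
    have hgm : Measurable g := by
      have := integrand_meas σ 0 1 c q zero_le_one
      simpa using this
    have hgfin : ∫⁻ r in Set.Ioi (1:ℝ), g r ≠ ⊤ := by
      have h' := h
      rw [wolffTail, ← hcdef, ← hqdef] at h'
      exact h'
    set T : ℝ → ℝ≥0∞ := fun R => ∫⁻ r in Set.Ioi R, g r with hTdef
    have hTanti : ∀ {a b : ℝ}, a ≤ b → T b ≤ T a := fun hab =>
      lintegral_mono_set (Set.Ioi_subset_Ioi hab)
    -- real constants
    set t₁ : ℝ := (2⁻¹:ℝ) ^ (α * p / 2) with ht₁def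
    have ht₁0 : 0 < t₁ := Real.rpow_pos_of_pos (by norm_num) _
    have ht₁1 : t₁ < 1 :=
      Real.rpow_lt_one (by norm_num) (by norm_num) (by positivity)
    set Γ₁ : ℝ := (1 - t₁)⁻¹ with hΓ₁def
    have hΓ₁0 : 0 < Γ₁ := by rw [hΓ₁def]; exact inv_pos.mpr (by linarith)
    set w₀ : ℝ := 2 ^ n - 1 with hw₀def
    have h2n : (1:ℝ) < 2 ^ n := one_lt_pow₀ (by norm_num) hn.ne'
    have hw₀0 : 0 < w₀ := by rw [hw₀def]; linarith
    set k : ℝ := 2 * Γ₁ / w₀ with hkdef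
    have hk0 : 0 < k := by rw [hkdef]; positivity
    set t₂ : ℝ := t₁ ^ q with ht₂def
    have ht₂0 : 0 < t₂ := Real.rpow_pos_of_pos ht₁0 _
    have ht₂1 : t₂ < 1 := Real.rpow_lt_one ht₁0.le ht₁1 hq0
    set Γ₂ : ℝ := (1 - t₂)⁻¹ with hΓ₂def
    have hΓ₂0 : 0 < Γ₂ := inv_pos.mpr (by linarith)
    set β : ℝ := (n:ℝ) - α * p / 2 with hβdef
    set ρ : ℝ := (2⁻¹:ℝ) ^ β with hρdef
    have hρ0 : 0 < ρ := Real.rpow_pos_of_pos (by norm_num) _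
    have h2c0 : (0:ℝ) < 2 ^ c := Real.rpow_pos_of_pos (by norm_num) _
    set C₁ : ℝ := (k * 2 ^ c) ^ q * Γ₂ * 8 ^ (c * q) with hC₁def
    have hC₁0 : 0 < C₁ := by
      rw [hC₁def]
      have := Real.rpow_pos_of_pos (mul_pos hk0 h2c0) q
      have := Real.rpow_pos_of_pos (by norm_num : (0:ℝ) < 8) (c*q)
      positivity
    set Ctot : ℝ := 2 * C₁ + 3 ^ (c * q) with hCtotdef
    have h3cq0 : (0:ℝ) < 3 ^ (c*q) := Real.rpow_pos_of_pos (by norm_num) _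
    have hCtot0 : 0 < Ctot := by rw [hCtotdef]; linarith
    -- tail smallness
    have hδ0 : (0:ℝ≥0∞) < ε / ENNReal.ofReal Ctot :=
      ENNReal.div_pos hε ENNReal.ofReal_ne_top
    obtain ⟨R₀, hR₀1, hR₀⟩ := tail_small hgfin hδ0.ne'
    set R : ℝ := max M (max R₀ 1) with hRdef
    have hR1 : (1:ℝ) ≤ R := le_max_of_le_right (le_max_right _ _)
    have hR0 : (0:ℝ) < R := lt_of_lt_of_le one_pos hR1
    have hRM : M ≤ R := le_max_left _ _
    have hR₀R : R₀ ≤ R := le_max_of_le_right (le_max_left _ _)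
    have hT3R : T (3 * R) < ε / ENNReal.ofReal Ctot :=
      lt_of_le_of_lt (hTanti (by linarith)) hR₀
    set S := σ (Metric.ball (0:EuclideanSpace ℝ (Fin n)) (4*R)) with hSdef
    have hSt : S ≠ ⊤ := measure_ball_lt_top.ne
    set w : ℕ → ℝ := fun j => k * ρ ^ j with hwdef
    have hw : ∀ j, 0 < w j := fun j => mul_pos hk0 (pow_pos hρ0 j)
    have hrj : ∀ j : ℕ, 0 < R * (2⁻¹:ℝ)^j := fun j => mul_pos hR0 (pow_pos (by norm_num) j)
    have hrjR : ∀ j : ℕ, R * (2⁻¹:ℝ)^j ≤ R := by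
      intro j
      have h1 : (2⁻¹:ℝ)^j ≤ 1 := pow_le_one₀ (by norm_num) (by norm_num)
      nlinarith
    -- good point
    have hterm : ∀ j : ℕ, (R * (2⁻¹:ℝ)^j)^n / w j = (R^n / k) * t₁ ^ j := by
      intro j
      have hsnρ : ((2⁻¹:ℝ)^n : ℝ) / ρ = t₁ := by
        rw [hρdef, ht₁def, ← Real.rpow_natCast (2⁻¹:ℝ) n, ← Real.rpow_sub (by norm_num)]
        congr 1
        rw [hβdef]; ring
      calc (R * (2⁻¹:ℝ)^j)^n / w j = (R^n * ((2⁻¹:ℝ)^n)^j) / (k * ρ^j) := by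
            rw [hwdef, mul_pow, pow_right_comm]
        _ = (R^n / k) * (((2⁻¹:ℝ)^n)^j / ρ^j) := mul_div_mul_comm _ _ _ _
        _ = (R^n / k) * t₁ ^ j := by rw [← div_pow, hsnρ]
    have hsummable : Summable (fun j : ℕ => (R * (2⁻¹:ℝ)^j)^n / w j) := by
      simp only [hterm]
      exact (summable_geometric_of_lt_one ht₁0.le ht₁1).mul_left _
    have htsum : (∑' j : ℕ, (R * (2⁻¹:ℝ)^j)^n / w j) < ((2:ℝ)^n - 1) * R^n := by
      have h1 : (∑' j : ℕ, (R * (2⁻¹:ℝ)^j)^n / w j) = (R^n / k) * Γ₁ := by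
        simp only [hterm]
        rw [tsum_mul_left, tsum_geometric_of_lt_one ht₁0.le ht₁1, hΓ₁def]
      rw [h1, hkdef]
      have hRn : (0:ℝ) < R^n := pow_pos hR0 n
      have h2 : R ^ n / (2 * Γ₁ / w₀) * Γ₁ = R^n * w₀ / 2 := by
        field_simp
      rw [h2, ← hw₀def]
      nlinarith
    obtain ⟨x, hxA, hgood⟩ := good_point hn σ hR0 w hw hsummable htsum
    have hx2R : ‖x‖ < 2*R := by
      have := hxA.1
      rwa [mem_ball_zero_iff] at this
    have hxR : R < ‖x‖ := by
      have := hxA.2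
      rw [Metric.mem_closedBall, dist_zero_right] at this
      push_neg at this
      exact this
    refine ⟨x, by linarith, ?_⟩
    -- the estimate
    rw [wolff, wolffTail, ← hcdef, ← hqdef]
    set W : ℝ → ℝ≥0∞ := fun r =>
      (σ (Metric.ball x r) / ENNReal.ofReal (r ^ c)) ^ q / ENNReal.ofReal r with hWdef
    have hWm : Measurable W := by
      have := integrand_meas σ x 1 c q zero_le_one
      simpa using this
    have hsplit : Set.Ioi (0:ℝ) = Set.Ioc 0 R ∪ Set.Ioi R :=
      (Set.Ioc_union_Ioi_eq_Ioi hR0.le).symm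
    rw [hsplit, lintegral_union measurableSet_Ioi Set.Ioc_disjoint_Ioi_same]
    -- FAR PART
    have hpt3 : ∀ r : ℝ, 0 < r →
        (σ (Metric.ball (0:EuclideanSpace ℝ (Fin n)) (3*r)) / ENNReal.ofReal (r ^ c)) ^ q
            / ENNReal.ofReal r
          = ENNReal.ofReal (3 ^ (c*q) * 3) * g (3*r) := by
      intro r hr0
      have hrc0 : (0:ℝ) < r ^ c := Real.rpow_pos_of_pos hr0 _
      have h3c0 : (0:ℝ) < (3:ℝ) ^ c := Real.rpow_pos_of_pos (by norm_num) _
      have hA1 : σ (Metric.ball (0:EuclideanSpace ℝ (Fin n)) (3*r)) / ENNReal.ofReal (r ^ c)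
          = ENNReal.ofReal (3^c) *
            (σ (Metric.ball (0:EuclideanSpace ℝ (Fin n)) (3*r)) / ENNReal.ofReal ((3*r) ^ c)) := by
        rw [ennreal_scale_div _ h3c0 hrc0, ← Real.mul_rpow (by norm_num) hr0.le]
      rw [hA1, ENNReal.mul_rpow_of_nonneg _ _ hq0.le, ENNReal.ofReal_rpow_of_pos h3c0,
        mul_div_assoc,
        ennreal_scale_div _ (by norm_num : (0:ℝ) < 3) hr0,
        hgdef]
      simp only
      rw [← mul_assoc, ← ENNReal.ofReal_mul (by positivity)]
      congr 2
      rw [← Real.rpow_mul (by norm_num : (0:ℝ) ≤ 3)]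
    have hfar : ∫⁻ r in Set.Ioi R, W r ≤ ENNReal.ofReal (3 ^ (c*q)) * T (3*R) := by
      have hf3m : Measurable fun r : ℝ =>
          (σ (Metric.ball (0:EuclideanSpace ℝ (Fin n)) (3*r)) / ENNReal.ofReal (r ^ c)) ^ q
            / ENNReal.ofReal r :=
        integrand_meas σ 0 3 c q (by norm_num)
      have hmono : ∀ r ∈ Set.Ioi R, W r ≤
          (σ (Metric.ball (0:EuclideanSpace ℝ (Fin n)) (3*r)) / ENNReal.ofReal (r ^ c)) ^ q
            / ENNReal.ofReal r := by
        intro r hr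
        rw [Set.mem_Ioi] at hr
        rw [hWdef]
        simp only
        gcongr
        intro y hy
        rw [Metric.mem_ball] at hy
        rw [mem_ball_zero_iff]
        have h1 : ‖y‖ - ‖x‖ ≤ ‖y - x‖ := by
          have := norm_sub_norm_le y x
          linarith
        rw [← dist_eq_norm] at h1
        have : R < r := hr
        linarith
      calc ∫⁻ r in Set.Ioi R, W r
          ≤ ∫⁻ r in Set.Ioi R,
            (σ (Metric.ball (0:EuclideanSpace ℝ (Fin n)) (3*r)) / ENNReal.ofReal (r ^ c)) ^ q
              / ENNReal.ofReal r := setLIntegral_mono hf3m hmono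
        _ = ∫⁻ r in Set.Ioi R, ENNReal.ofReal (3 ^ (c*q) * 3) * g (3*r) := by
            apply setLIntegral_congr_fun measurableSet_Ioi
            intro r hr
            exact hpt3 r (lt_of_lt_of_le one_pos (le_trans hR1 (le_of_lt hr)))
        _ = ENNReal.ofReal (3 ^ (c*q) * 3) * ∫⁻ r in Set.Ioi R, g (3*r) :=
            lintegral_const_mul _ (hgm.comp (measurable_const_mul 3))
        _ = ENNReal.ofReal (3 ^ (c*q) * 3) * (ENNReal.ofReal 3⁻¹ * T (3*R)) := by
            rw [scale3 hgm]
        _ = ENNReal.ofReal (3 ^ (c*q)) * T (3*R) := by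
            rw [← mul_assoc, ← ENNReal.ofReal_mul (by positivity)]
            congr 2
            field_simp
    -- NEAR PART
    have hIoc : Set.Ioc (0:ℝ) R = ⋃ j : ℕ, Set.Ioc (R * (2⁻¹:ℝ)^(j+1)) (R * (2⁻¹:ℝ)^j) := by
      ext r
      simp only [Set.mem_Ioc, Set.mem_iUnion]
      constructor
      · rintro ⟨hr0, hrR⟩
        have hex : ∃ m : ℕ, R * (2⁻¹:ℝ)^m < r := by
          obtain ⟨m, hm⟩ := exists_pow_lt_of_lt_one (div_pos hr0 hR0) (by norm_num : (2⁻¹:ℝ) < 1)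
          refine ⟨m, ?_⟩
          have := (lt_div_iff₀ hR0).mp hm
          linarith [this]
        have hspec : R * (2⁻¹:ℝ)^(Nat.find hex) < r := Nat.find_spec hex
        have hm₀pos : Nat.find hex ≠ 0 := by
          intro h0
          rw [h0] at hspec
          simp only [pow_zero, mul_one] at hspec
          linarith
        obtain ⟨j, hj⟩ := Nat.exists_eq_succ_of_ne_zero hm₀pos
        refine ⟨j, ?_, ?_⟩
        · rw [← Nat.succ_eq_add_one, ← hj]
          exact hspec
        · by_contra hcon
          push_neg at hcon
          exact Nat.find_min hex (by omega) hcon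
      · rintro ⟨j, hj1, hj2⟩
        exact ⟨lt_trans (hrj (j+1)) hj1, le_trans hj2 (hrjR j)⟩
    have hdisj : Pairwise (Function.onFun Disjoint
        fun j : ℕ => Set.Ioc (R * (2⁻¹:ℝ)^(j+1)) (R * (2⁻¹:ℝ)^j)) := by
      intro i j hij
      rw [Function.onFun]
      rw [Set.Ioc_disjoint_Ioc]
      have key : ∀ a b : ℕ, a < b → R * (2⁻¹:ℝ)^b ≤ R * (2⁻¹:ℝ)^(a+1) := by
        intro a b hab
        apply mul_le_mul_of_nonneg_left _ hR0.le
        exact pow_le_pow_of_le_one (by norm_num) (by norm_num) (by omega)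
      rcases hij.lt_or_gt with hlt | hlt
      · exact le_trans (min_le_right _ _) (le_trans (key i j hlt) (le_max_left _ _))
      · exact le_trans (min_le_left _ _) (le_trans (key j i hlt) (le_max_right _ _))
    have hpiece : ∀ j : ℕ, ∫⁻ r in Set.Ioc (R * (2⁻¹:ℝ)^(j+1)) (R * (2⁻¹:ℝ)^j), W r
        ≤ (ENNReal.ofReal (w j) * S / ENNReal.ofReal ((R * (2⁻¹:ℝ)^(j+1))^c)) ^ q := by
      intro j
      have ha0 : (0:ℝ) < R * (2⁻¹:ℝ)^(j+1) := hrj (j+1)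
      have hconst : ∀ r ∈ Set.Ioc (R * (2⁻¹:ℝ)^(j+1)) (R * (2⁻¹:ℝ)^j), W r ≤
          (ENNReal.ofReal (w j) * S / ENNReal.ofReal ((R * (2⁻¹:ℝ)^(j+1))^c)) ^ q
            / ENNReal.ofReal (R * (2⁻¹:ℝ)^(j+1)) := by
        intro r hr
        rw [hWdef]
        simp only
        have hr0 : 0 < r := lt_trans ha0 hr.1
        gcongr
        · exact le_trans (measure_mono (Metric.ball_subset_ball hr.2)) (hgood j)
        · exact hr.1.le
        · exact hr.1.le
      calc ∫⁻ r in Set.Ioc (R * (2⁻¹:ℝ)^(j+1)) (R * (2⁻¹:ℝ)^j), W r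
          ≤ ∫⁻ _ in Set.Ioc (R * (2⁻¹:ℝ)^(j+1)) (R * (2⁻¹:ℝ)^j),
              ((ENNReal.ofReal (w j) * S / ENNReal.ofReal ((R * (2⁻¹:ℝ)^(j+1))^c)) ^ q
                / ENNReal.ofReal (R * (2⁻¹:ℝ)^(j+1))) :=
            setLIntegral_mono measurable_const hconst
        _ = ((ENNReal.ofReal (w j) * S / ENNReal.ofReal ((R * (2⁻¹:ℝ)^(j+1))^c)) ^ q
              / ENNReal.ofReal (R * (2⁻¹:ℝ)^(j+1))) * volume (Set.Ioc (R * (2⁻¹:ℝ)^(j+1)) (R * (2⁻¹:ℝ)^j)) :=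
            setLIntegral_const _ _
        _ = ((ENNReal.ofReal (w j) * S / ENNReal.ofReal ((R * (2⁻¹:ℝ)^(j+1))^c)) ^ q
              / ENNReal.ofReal (R * (2⁻¹:ℝ)^(j+1))) * ENNReal.ofReal (R * (2⁻¹:ℝ)^(j+1)) := by
            rw [Real.volume_Ioc]
            congr 2
            ring
        _ = (ENNReal.ofReal (w j) * S / ENNReal.ofReal ((R * (2⁻¹:ℝ)^(j+1))^c)) ^ q :=
            ENNReal.div_mul_cancel (ENNReal.ofReal_pos.mpr ha0).ne' ENNReal.ofReal_ne_top
    have hterm2 : ∀ j : ℕ, (ENNReal.ofReal (w j) * S / ENNReal.ofReal ((R * (2⁻¹:ℝ)^(j+1))^c)) ^ q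
        = S^q * ENNReal.ofReal ((w j / (R * (2⁻¹:ℝ)^(j+1))^c) ^ q) := by
      intro j
      have hac : (0:ℝ) < (R * (2⁻¹:ℝ)^(j+1))^c := Real.rpow_pos_of_pos (hrj (j+1)) c
      rw [mul_comm (ENNReal.ofReal (w j)) S, mul_div_assoc, ← ENNReal.ofReal_div_of_pos hac,
        ENNReal.mul_rpow_of_nonneg _ _ hq0.le, ENNReal.ofReal_rpow_of_pos (div_pos (hw j) hac)]
    have huval : ∀ j : ℕ, (w j / (R * (2⁻¹:ℝ)^(j+1))^c) ^ q = (k * 2^c / R^c)^q * t₂ ^ j := by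
      intro j
      have hsc0 : (0:ℝ) < (2⁻¹:ℝ)^c := Real.rpow_pos_of_pos (by norm_num) c
      have hsc : ((2⁻¹:ℝ)^(j+1) : ℝ)^c = ((2⁻¹:ℝ)^c)^(j+1) := by
        rw [← Real.rpow_natCast (2⁻¹:ℝ) (j+1), ← Real.rpow_mul (by norm_num), mul_comm,
          Real.rpow_mul (by norm_num), Real.rpow_natCast]
      have h1 : (R * (2⁻¹:ℝ)^(j+1))^c = R^c * ((2⁻¹:ℝ)^c)^(j+1) := by
        rw [Real.mul_rpow hR0.le (by positivity), hsc]
      have hρsc : ρ / (2⁻¹:ℝ)^c = t₁ := by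
        rw [hρdef, ht₁def, ← Real.rpow_sub (by norm_num)]
        congr 1
        rw [hβdef, hcdef]; ring
      have h2c : ((2:ℝ)^c : ℝ) = ((2⁻¹:ℝ)^c)⁻¹ := by
        rw [← Real.inv_rpow (by norm_num : (0:ℝ) ≤ 2⁻¹), inv_inv]
      have hRc0 : (0:ℝ) < R^c := Real.rpow_pos_of_pos hR0 c
      have h2 : w j / (R * (2⁻¹:ℝ)^(j+1))^c = (k * 2^c / R^c) * t₁ ^ j := by
        rw [hwdef, h1]
        simp only
        rw [← hρsc, h2c]
        rw [div_pow, pow_succ]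
        field_simp
      rw [h2, Real.mul_rpow (by positivity) (pow_nonneg ht₁0.le j), ht₂def]
      congr 1
      rw [← Real.rpow_natCast t₁ j, ← Real.rpow_mul ht₁0.le, mul_comm,
        Real.rpow_mul ht₁0.le, Real.rpow_natCast]
    have husum : Summable (fun j : ℕ => (w j / (R * (2⁻¹:ℝ)^(j+1))^c) ^ q) := by
      simp only [huval]
      exact (summable_geometric_of_lt_one ht₂0.le ht₂1).mul_left _
    have hsum2 : ∑' j : ℕ, (w j / (R * (2⁻¹:ℝ)^(j+1))^c) ^ q = (k * 2^c / R^c)^q * Γ₂ := by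
      simp only [huval]
      rw [tsum_mul_left, tsum_geometric_of_lt_one ht₂0.le ht₂1, hΓ₂def]
    -- step E
    have h8Rcq0 : (0:ℝ) < (8*R)^(c*q) := Real.rpow_pos_of_pos (by linarith) _
    have hP : S^q / ENNReal.ofReal ((8*R)^(c*q)) ≤ ENNReal.ofReal 2 * T (4*R) := by
      have hPle : ∀ t ∈ Set.Ioc (4*R) (8*R),
          (S^q / ENNReal.ofReal ((8*R)^(c*q))) / ENNReal.ofReal (8*R) ≤ g t := by
        intro t ht
        have ht0 : 0 < t := lt_trans (by linarith) ht.1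
        rw [hgdef]
        simp only
        have heq : S^q / ENNReal.ofReal ((8*R)^(c*q)) = (S / ENNReal.ofReal ((8*R)^c))^q := by
          rw [ENNReal.div_rpow_of_nonneg _ _ hq0.le, ENNReal.ofReal_rpow_of_pos (by positivity),
            ← Real.rpow_mul (by linarith : (0:ℝ) ≤ 8*R)]
        rw [heq]
        gcongr
        · exact measure_mono (Metric.ball_subset_ball (by linarith [ht.1]))
        · exact ht.2
        · exact ht.2
      have hintle : (S^q / ENNReal.ofReal ((8*R)^(c*q)) / ENNReal.ofReal (8*R))
          * ENNReal.ofReal (4*R) ≤ T (4*R) := by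
        calc (S^q / ENNReal.ofReal ((8*R)^(c*q)) / ENNReal.ofReal (8*R)) * ENNReal.ofReal (4*R)
            = ∫⁻ _ in Set.Ioc (4*R) (8*R),
                (S^q / ENNReal.ofReal ((8*R)^(c*q)) / ENNReal.ofReal (8*R)) := by
              rw [setLIntegral_const, Real.volume_Ioc]
              congr 2
              ring
          _ ≤ ∫⁻ t in Set.Ioc (4*R) (8*R), g t := setLIntegral_mono hgm hPle
          _ ≤ T (4*R) := lintegral_mono_set Set.Ioc_subset_Ioi_self
      calc S^q / ENNReal.ofReal ((8*R)^(c*q))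
          = (S^q / ENNReal.ofReal ((8*R)^(c*q)) / ENNReal.ofReal (8*R)) * ENNReal.ofReal (8*R) :=
            (ENNReal.div_mul_cancel (ENNReal.ofReal_pos.mpr (by linarith)).ne'
              ENNReal.ofReal_ne_top).symm
        _ = (S^q / ENNReal.ofReal ((8*R)^(c*q)) / ENNReal.ofReal (8*R))
              * (ENNReal.ofReal (4*R) * ENNReal.ofReal 2) := by
            rw [← ENNReal.ofReal_mul (by linarith)]
            congr 1
            rw [mul_comm (4*R) 2]; ring_nf
        _ = ((S^q / ENNReal.ofReal ((8*R)^(c*q)) / ENNReal.ofReal (8*R)) * ENNReal.ofReal (4*R))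
              * ENNReal.ofReal 2 := by rw [mul_assoc]
        _ ≤ T (4*R) * ENNReal.ofReal 2 := mul_le_mul_left hintle _
        _ = ENNReal.ofReal 2 * T (4*R) := mul_comm _ _
    have hconst_eq : (k * 2^c / R^c)^q * Γ₂ = C₁ / (8*R)^(c*q) := by
      have h8R : ((8*R):ℝ)^(c*q) = 8^(c*q) * R^(c*q) := Real.mul_rpow (by norm_num) hR0.le
      have hdivp : ((k * 2^c / R^c):ℝ)^q = (k * 2^c)^q / R^(c*q) := by
        rw [Real.div_rpow (by positivity) (Real.rpow_nonneg hR0.le c), ← Real.rpow_mul hR0.le]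
      rw [hC₁def, h8R, hdivp]
      have h1 : (0:ℝ) < 8^(c*q) := Real.rpow_pos_of_pos (by norm_num) _
      have h2 : (0:ℝ) < R^(c*q) := Real.rpow_pos_of_pos hR0 _
      field_simp
    have hnear : ∫⁻ r in Set.Ioc 0 R, W r
        ≤ ENNReal.ofReal C₁ * (ENNReal.ofReal 2 * T (4*R)) := by
      calc ∫⁻ r in Set.Ioc 0 R, W r
          = ∑' j : ℕ, ∫⁻ r in Set.Ioc (R * (2⁻¹:ℝ)^(j+1)) (R * (2⁻¹:ℝ)^j), W r := by
            rw [hIoc, lintegral_iUnion (fun j => measurableSet_Ioc) hdisj]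
        _ ≤ ∑' j : ℕ, (ENNReal.ofReal (w j) * S / ENNReal.ofReal ((R * (2⁻¹:ℝ)^(j+1))^c)) ^ q :=
            ENNReal.tsum_le_tsum hpiece
        _ = ∑' j : ℕ, S^q * ENNReal.ofReal ((w j / (R * (2⁻¹:ℝ)^(j+1))^c) ^ q) :=
            tsum_congr hterm2
        _ = S^q * ENNReal.ofReal ((k * 2^c / R^c)^q * Γ₂) := by
            rw [ENNReal.tsum_mul_left,
              ← ENNReal.ofReal_tsum_of_nonneg (fun j => by positivity) husum, hsum2]
        _ = ENNReal.ofReal C₁ * (S^q / ENNReal.ofReal ((8*R)^(c*q))) := by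
            rw [hconst_eq, ENNReal.ofReal_div_of_pos h8Rcq0, ← mul_div_assoc,
              mul_comm (S^q) (ENNReal.ofReal C₁), mul_div_assoc]
        _ ≤ ENNReal.ofReal C₁ * (ENNReal.ofReal 2 * T (4*R)) := mul_le_mul_right hP _
    -- COMBINE
    calc (∫⁻ r in Set.Ioc 0 R, W r) + ∫⁻ r in Set.Ioi R, W r
        ≤ ENNReal.ofReal C₁ * (ENNReal.ofReal 2 * T (4*R))
            + ENNReal.ofReal (3 ^ (c*q)) * T (3*R) := add_le_add hnear hfar
      _ ≤ ENNReal.ofReal C₁ * (ENNReal.ofReal 2 * T (3*R))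
            + ENNReal.ofReal (3 ^ (c*q)) * T (3*R) := by
          exact add_le_add_left (mul_le_mul_right (mul_le_mul_right (hTanti (by linarith)) _) _) _
      _ = ENNReal.ofReal Ctot * T (3*R) := by
          rw [hCtotdef, ← mul_assoc, ← ENNReal.ofReal_mul hC₁0.le,
            ENNReal.ofReal_add (by positivity) h3cq0.le, add_mul]
          congr 3
          ring
      _ ≤ ENNReal.ofReal Ctot * (ε / ENNReal.ofReal Ctot) := mul_le_mul_right hT3R.le _
      _ ≤ ε := ENNReal.mul_div_le

  refine le_antisymm ?_ (by simp)
  refine ENNReal.le_of_forall_pos_le_add fun ε hε _ => ?_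
  rw [zero_add]
  refine Filter.liminf_le_of_frequently_le' ?_
  rw [Filter.frequently_iff]
  intro U hU
  rw [Filter.mem_cocompact] at hU
  obtain ⟨K, hK, hKU⟩ := hU
  obtain ⟨M, hM⟩ := hK.isBounded.subset_closedBall 0
  obtain ⟨x, hx1, hx2⟩ := main (ε : ℝ≥0∞) (by exact_mod_cast hε.ne') M
  refine ⟨x, hKU ?_, hx2⟩
  simp only [Set.mem_compl_iff]
  intro hxK
  have := hM hxK
  rw [Metric.mem_closedBall, dist_zero_right] at this
  linarith
end

section
/- Let $1<p<\infty$, $0<q<p-1$, $0<\alpha<n/p$, and $\sigma$ a nonnegative locally finite Borel measure on $\mathbb{R}^n$. Suppose $u_B\ge 0$ satisfies $u_B\le \mathbf{W}_{\alpha,p}(u_B^q\,d\sigma|_B)$ $\sigma|_B$-a.e. and $\int_B u_B^q\,d\sigma<\infty$. Then $\left(\int_B u_B^q\,d\sigma\right)^{(p-1-q)/(q(p-1))}\le \kappa(B)$, where $\kappa(B)$ is the least constant in $\|\mathbf{W}_{\alpha,p}\nu\|_{L^q(\sigma|_B)}\le\kappa(B)\nu(\mathbb{R}^n)^{1/(p-1)}$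 over all finite nonnegative measures $\nu$. -/
open MeasureTheory ENNReal

noncomputable def kappa (n : ℕ) (p α q : ℝ) (σ : Measure (EuclideanSpace ℝ (Fin n)))
    (B : Set (EuclideanSpace ℝ (Fin n))) : ℝ≥0∞ :=
  sInf {κ : ℝ≥0∞ | ∀ ν : Measure (EuclideanSpace ℝ (Fin n)), IsFiniteMeasure ν →
    (∫⁻ x in B, wolff n p α ν x ^ q ∂σ) ^ (1 / q) ≤ κ * (ν Set.univ) ^ (1 / (p - 1))}

noncomputable def kappaTail (n : ℕ) (p α q : ℝ) (σ : Measure (EuclideanSpace ℝ (Fin n)))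
    (x : EuclideanSpace ℝ (Fin n)) (t : ℝ) : ℝ≥0∞ :=
  ∫⁻ s in Set.Ioi t,
    (kappa n p α q σ (Metric.ball x s) ^ (q * (p - 1) / (p - 1 - q))
      / ENNReal.ofReal (s ^ ((n : ℝ) - α * p))) ^ (1 / (p - 1)) / ENNReal.ofReal s

theorem kappa_lower_bound_of_subsolution (n : ℕ) (p q α : ℝ) (hp : 1 < p)
    (hq0 : 0 < q) (hq : q < p - 1) (hα0 : 0 < α) (hα : α < n / p)
    (σ : Measure (EuclideanSpace ℝ (Fin n))) [IsLocallyFiniteMeasure σ]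
    (x : EuclideanSpace ℝ (Fin n)) (R : ℝ) (hR : 0 < R)
    (u : EuclideanSpace ℝ (Fin n) → ℝ≥0∞) (hu : Measurable u)
    (hsub : ∀ᵐ y ∂σ.restrict (Metric.ball x R),
      u y ≤ wolff n p α ((σ.restrict (Metric.ball x R)).withDensity fun z => u z ^ q) y)
    (hfin : ∫⁻ y in Metric.ball x R, u y ^ q ∂σ ≠ ⊤) :
    (∫⁻ y in Metric.ball x R, u y ^ q ∂σ) ^ ((p - 1 - q) / (q * (p - 1)))
      ≤ kappa n p α q σ (Metric.ball x R) := by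
  have hp1 : 0 < p - 1 := by linarith
  set B := Metric.ball x R with hB
  set I := ∫⁻ y in B, u y ^ q ∂σ with hI
  set ν := (σ.restrict B).withDensity (fun z => u z ^ q) with hν
  have hνuniv : ν Set.univ = I := by
    rw [hν, withDensity_apply _ MeasurableSet.univ, Measure.restrict_univ]
  have hνfin : IsFiniteMeasure ν := ⟨by rw [hνuniv]; exact hfin.lt_top⟩
  refine le_sInf ?_
  intro κ hκ
  have h1 := hκ ν hνfin
  rw [hνuniv] at h1
  have h2 : I ≤ ∫⁻ y in B, wolff n p α ν y ^ q ∂σ := by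
    refine lintegral_mono_ae ?_
    filter_upwards [hsub] with y hy
    exact ENNReal.rpow_le_rpow hy hq0.le
  have h3 : I ^ (1 / q) ≤ κ * I ^ (1 / (p - 1)) :=
    le_trans (ENNReal.rpow_le_rpow h2 (by positivity)) h1
  have hepos : 0 < (p - 1 - q) / (q * (p - 1)) := by
    apply div_pos <;> nlinarith
  rcases eq_or_ne I 0 with h0 | h0
  · rw [h0, ENNReal.zero_rpow_of_pos hepos]
    exact zero_le
  · have hsplit : I ^ (1 / q) = I ^ ((p - 1 - q) / (q * (p - 1))) * I ^ (1 / (p - 1)) := by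
      rw [← ENNReal.rpow_add _ _ h0 hfin]
      congr 1
      field_simp
      ring
    rw [hsplit] at h3
    have hc0 : I ^ (1 / (p - 1)) ≠ 0 := by
      simp [ENNReal.rpow_eq_zero_iff, h0, hfin]
    have hct : I ^ (1 / (p - 1)) ≠ ⊤ := ENNReal.rpow_ne_top_of_nonneg (by positivity) hfin
    exact (ENNReal.mul_le_mul_iff_left hc0 hct).mp h3
end

section
/- Let $1<p<\infty$, $0<\alpha<n/p$, $r>0$, and let $\sigma$ be a nonnegative locally finite Borel measure on $\mathbb{R}^n$. Then pointwise on $\mathbb{R}^n$, $\mathbf{W}_{\alpha,p}\big[(\mathbf{W}_{\alpha,p}\sigma)^r\,d\sigma\big] \ge \mathfrak{c}^{r/(p-1)}\,(\mathbf{W}_{\alpha,p}\sigma)^{r/(p-1)+1}$, where $\mathfrak{c}>0$ depends only on $n,p,\alpha$ (not on $r$). -/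
open MeasureTheory ENNReal

open Set

/-- Distribution bound: the set of positive `t` whose tail measure is at most `lam`
has measure at most `lam`, for an atomless measure. -/
private lemma meas_tail_le (μ : Measure ℝ) (h0 : ∀ a : ℝ, μ {a} = 0) (lam : ℝ≥0∞) :
    μ {t : ℝ | 0 < t ∧ μ (Ioi t) ≤ lam} ≤ lam := by
  set E := {t : ℝ | 0 < t ∧ μ (Ioi t) ≤ lam} with hE
  rcases E.eq_empty_or_nonempty with h | hne
  · simp [h]
  have hbdd : BddBelow E := ⟨0, fun e he => he.1.le⟩
  set s₀ := sInf E with hs₀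
  have hsub : E ⊆ Ici s₀ := fun e he => csInf_le hbdd he
  have h3 : μ (Ioi s₀) ≤ lam := by
    have hU : Ioi s₀ = ⋃ m : ℕ, Ioi (s₀ + ((m : ℝ) + 1)⁻¹) := by
      ext y
      simp only [mem_Ioi, mem_iUnion]
      constructor
      · intro hy
        obtain ⟨m, hm⟩ := exists_nat_gt (y - s₀)⁻¹
        refine ⟨m, ?_⟩
        have hy0 : 0 < y - s₀ := by linarith
        have hm1 : (y - s₀)⁻¹ < (m : ℝ) + 1 := hm.trans (lt_add_one _)
        have : ((m : ℝ) + 1)⁻¹ < y - s₀ := by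
          rw [inv_lt_comm₀ (by positivity) hy0]
          exact hm1
        linarith
      · rintro ⟨m, hm⟩
        have : (0 : ℝ) < ((m : ℝ) + 1)⁻¹ := by positivity
        linarith
    rw [hU]
    have hmono : Monotone fun m : ℕ => Ioi (s₀ + ((m : ℝ) + 1)⁻¹) := by
      intro a b hab
      apply Ioi_subset_Ioi
      have : ((b : ℝ) + 1)⁻¹ ≤ ((a : ℝ) + 1)⁻¹ := by
        apply inv_anti₀ (by positivity)
        exact_mod_cast by exact_mod_cast add_le_add_left (Nat.cast_le.mpr hab) 1
      linarith
    rw [hmono.directed_le.measure_iUnion]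
    refine iSup_le fun m => ?_
    have hlt : s₀ < s₀ + ((m : ℝ) + 1)⁻¹ := by
      have : (0 : ℝ) < ((m : ℝ) + 1)⁻¹ := by positivity
      linarith
    obtain ⟨e, heE, he⟩ := exists_lt_of_csInf_lt hne hlt
    calc μ (Ioi (s₀ + ((m : ℝ) + 1)⁻¹)) ≤ μ (Ioi e) :=
          measure_mono (Ioi_subset_Ioi he.le)
      _ ≤ lam := heE.2
  calc μ E ≤ μ (Ici s₀) := measure_mono hsub
    _ ≤ μ {s₀} + μ (Ioi s₀) := by
        rw [← Ioi_insert, insert_eq]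
        exact measure_union_le _ _
    _ = μ (Ioi s₀) := by rw [h0 s₀, zero_add]
    _ ≤ lam := h3

private lemma core_lemma (μ : Measure ℝ) (h0 : ∀ a : ℝ, μ {a} = 0) {q : ℝ} (hq : 0 < q)
    {A : ℝ} (hA0 : 0 ≤ A) (hA : ENNReal.ofReal A ≤ μ (Ioi 0)) :
    ENNReal.ofReal A ^ (q + 1) / ENNReal.ofReal (q + 1) ≤
      ∫⁻ t in Ioi (0 : ℝ), μ (Ioi t) ^ q ∂μ := by
  rcases eq_or_lt_of_le hA0 with rfl | hApos
  · simp [ENNReal.zero_rpow_of_pos (by linarith : (0 : ℝ) < q + 1)]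
  have hm1 : (-1 : ℝ) < 1 / q := by
    have := one_div_pos.mpr hq
    linarith
  have hT : Antitone fun t : ℝ => μ (Ioi t) := fun a b hab => measure_mono (Ioi_subset_Ioi hab)
  have hTm : Measurable fun t : ℝ => μ (Ioi t) := hT.measurable
  -- distribution bound
  have dist : ∀ lam : ℝ, 0 ≤ lam → lam < A →
      ENNReal.ofReal (A - lam) ≤ μ {t : ℝ | 0 < t ∧ ENNReal.ofReal lam < μ (Ioi t)} := by
    intro lam hlam0 _
    have hsplit : μ (Ioi (0 : ℝ)) ≤ μ {t : ℝ | 0 < t ∧ μ (Ioi t) ≤ ENNReal.ofReal lam}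
        + μ {t : ℝ | 0 < t ∧ ENNReal.ofReal lam < μ (Ioi t)} := by
      refine le_trans (measure_mono ?_) (measure_union_le _ _)
      intro t ht
      rcases le_or_gt (μ (Ioi t)) (ENNReal.ofReal lam) with h | h
      · exact Or.inl ⟨ht, h⟩
      · exact Or.inr ⟨ht, h⟩
    have h1 : ENNReal.ofReal A ≤ ENNReal.ofReal lam
        + μ {t : ℝ | 0 < t ∧ ENNReal.ofReal lam < μ (Ioi t)} :=
      hA.trans (hsplit.trans (add_le_add_left (meas_tail_le μ h0 _) _))
    rw [ENNReal.ofReal_sub _ hlam0]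
    exact tsub_le_iff_left.mpr h1
  set S := Ioi (0 : ℝ) ∩ (fun t => μ (Ioi t)) ⁻¹' {∞} with hSdef
  have hSm : MeasurableSet S := measurableSet_Ioi.inter (hTm (measurableSet_singleton _))
  by_cases hSz : μ S = 0
  · -- main case: tail a.e. finite
    set f : ℝ → ℝ := fun t => (μ (Ioi t)).toReal ^ q with hf
    have hfm : Measurable f := (hTm.ennreal_toReal).pow measurable_const
    have pt : ∀ t : ℝ, ENNReal.ofReal (f t) ≤ μ (Ioi t) ^ q := by
      intro t
      by_cases h : μ (Ioi t) = ∞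
      · rw [h, ENNReal.top_rpow_of_pos hq]; exact le_top
      · rw [hf, ← ENNReal.ofReal_rpow_of_nonneg ENNReal.toReal_nonneg hq.le,
          ENNReal.ofReal_toReal h]
    have key : ∫⁻ t, ENNReal.ofReal (f t) ∂(μ.restrict (Ioi 0))
        = ∫⁻ lam in Ioi (0 : ℝ), μ.restrict (Ioi 0) {a : ℝ | lam < f a} :=
      lintegral_eq_lintegral_meas_lt _ (ae_of_all _ fun t => Real.rpow_nonneg ENNReal.toReal_nonneg q)
        hfm.aemeasurable
    have step3 : ∀ lam ∈ Ioo (0 : ℝ) (A ^ q),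
        ENNReal.ofReal (A - lam ^ (1 / q)) ≤ μ.restrict (Ioi 0) {a : ℝ | lam < f a} := by
      intro lam hlam
      set l' := lam ^ (1 / q) with hl'
      have hl'0 : 0 < l' := Real.rpow_pos_of_pos hlam.1 _
      have hl'q : l' ^ q = lam := by
        rw [hl', ← Real.rpow_mul hlam.1.le, one_div_mul_cancel hq.ne', Real.rpow_one]
      have hl'A : l' < A := by
        have h1 : lam ^ (1 / q) < (A ^ q) ^ (1 / q) :=
          Real.rpow_lt_rpow hlam.1.le hlam.2 (by positivity)
        rwa [← Real.rpow_mul hA0, mul_one_div, div_self hq.ne', Real.rpow_one] at h1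
      have hF := dist l' hl'0.le hl'A
      set F := {t : ℝ | 0 < t ∧ ENNReal.ofReal l' < μ (Ioi t)} with hFdef
      have hFm : MeasurableSet F := by
        have : F = Ioi (0 : ℝ) ∩ (fun t => μ (Ioi t)) ⁻¹' (Ioi (ENNReal.ofReal l')) := by
          ext t; simp [hFdef, mem_Ioi, and_comm]
        rw [this]
        exact measurableSet_Ioi.inter (hTm measurableSet_Ioi)
      have hsub2 : F \ S ⊆ {a : ℝ | lam < f a} := by
        rintro t ⟨htF, htS⟩
        have hne : μ (Ioi t) ≠ ∞ := by
          intro h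
          exact htS ⟨htF.1, by simp [h]⟩
        have hlt : l' < (μ (Ioi t)).toReal :=
          (ENNReal.ofReal_lt_iff_lt_toReal hl'0.le hne).mp htF.2
        have : l' ^ q < (μ (Ioi t)).toReal ^ q :=
          Real.rpow_lt_rpow hl'0.le hlt hq
        rw [hl'q] at this
        exact this
      calc ENNReal.ofReal (A - l') ≤ μ F := hF
        _ = μ.restrict (Ioi 0) F := by
            rw [Measure.restrict_apply hFm]
            congr 1
            exact (inter_eq_self_of_subset_left fun t ht => ht.1).symm
        _ = μ.restrict (Ioi 0) (F \ S) := by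
            refine (measure_diff_null ?_).symm
            rw [Measure.restrict_apply hSm]
            exact measure_mono_null inter_subset_left hSz
        _ ≤ μ.restrict (Ioi 0) {a : ℝ | lam < f a} := measure_mono hsub2
    -- the elementary integral
    have hint : IntegrableOn (fun lam : ℝ => A - lam ^ (1 / q)) (Ioo 0 (A ^ q)) := by
      have h1 : IntegrableOn (fun lam : ℝ => lam ^ (1 / q)) (Ioo 0 (A ^ q)) := by
        have := intervalIntegral.intervalIntegrable_rpow' (a := 0) (b := A ^ q)
          hm1
        rwa [intervalIntegrable_iff_integrableOn_Ioo_of_le (by positivity)] at this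
      exact ((integrableOn_const_iff).mpr (Or.inr measure_Ioo_lt_top)).sub h1
    have hnn : ∀ lam ∈ Ioo (0 : ℝ) (A ^ q), 0 ≤ A - lam ^ (1 / q) := by
      intro lam hlam
      have h1 : lam ^ (1 / q) ≤ (A ^ q) ^ (1 / q) :=
        Real.rpow_le_rpow hlam.1.le hlam.2.le (by positivity)
      rw [← Real.rpow_mul hA0, mul_one_div, div_self hq.ne', Real.rpow_one] at h1
      linarith
    have hval : ∫ lam in Ioo (0 : ℝ) (A ^ q), (A - lam ^ (1 / q)) = A ^ (q + 1) / (q + 1) := by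
      rw [← integral_Ioc_eq_integral_Ioo, ← intervalIntegral.integral_of_le (by positivity)]
      have hii : IntervalIntegrable (fun lam : ℝ => lam ^ (1 / q)) volume 0 (A ^ q) :=
        intervalIntegral.intervalIntegrable_rpow' hm1
      rw [intervalIntegral.integral_sub intervalIntegrable_const hii,
        intervalIntegral.integral_const, integral_rpow (Or.inl hm1)]
      have hAq : (A ^ q) ^ (1 / q + 1) = A ^ (q + 1) := by
        rw [← Real.rpow_mul hA0, mul_add, mul_one_div, div_self hq.ne', mul_one, add_comm]
      have h0q : (0 : ℝ) ^ (1 / q + 1) = 0 := Real.zero_rpow (by positivity)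
      rw [hAq, h0q, sub_zero, sub_zero, smul_eq_mul, ← Real.rpow_add_one hApos.ne']
      have hq1 : (0:ℝ) < 1 / q + 1 := by positivity
      field_simp
      ring
    calc ENNReal.ofReal A ^ (q + 1) / ENNReal.ofReal (q + 1)
        = ENNReal.ofReal (A ^ (q + 1) / (q + 1)) := by
          rw [ENNReal.ofReal_div_of_pos (by linarith),
            ENNReal.ofReal_rpow_of_nonneg hA0 (by linarith)]
      _ = ∫⁻ lam in Ioo (0 : ℝ) (A ^ q), ENNReal.ofReal (A - lam ^ (1 / q)) := by
          rw [← hval]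
          rw [ofReal_integral_eq_lintegral_ofReal hint
            ((ae_restrict_iff' measurableSet_Ioo).mpr (ae_of_all _ hnn))]
      _ ≤ ∫⁻ lam in Ioo (0 : ℝ) (A ^ q), μ.restrict (Ioi 0) {a : ℝ | lam < f a} :=
          setLIntegral_mono' measurableSet_Ioo step3
      _ ≤ ∫⁻ lam in Ioi (0 : ℝ), μ.restrict (Ioi 0) {a : ℝ | lam < f a} :=
          lintegral_mono_set Ioo_subset_Ioi_self
      _ = ∫⁻ t, ENNReal.ofReal (f t) ∂(μ.restrict (Ioi 0)) := key.symm
      _ ≤ ∫⁻ t in Ioi (0 : ℝ), μ (Ioi t) ^ q ∂μ := lintegral_mono pt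
  · -- infinite tail on positive-measure set
    have : ∫⁻ t in Ioi (0 : ℝ), μ (Ioi t) ^ q ∂μ = ∞ := by
      have h1 : ∫⁻ t in S, μ (Ioi t) ^ q ∂μ = ∞ := by
        have : ∫⁻ t in S, μ (Ioi t) ^ q ∂μ = ∫⁻ _ in S, ∞ ∂μ := by
          apply setLIntegral_congr_fun hSm
          exact fun t ht => by
            rcases ht with ⟨-, ht2⟩
            simp only [mem_preimage, mem_singleton_iff] at ht2
            rw [ht2, ENNReal.top_rpow_of_pos hq]
        rw [this, setLIntegral_const, ENNReal.top_mul hSz]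
      refine eq_top_iff.mpr ?_
      rw [← h1]
      exact lintegral_mono_set inter_subset_left
    rw [this]
    exact le_top

private lemma core_lemma' (μ : Measure ℝ) (h0 : ∀ a : ℝ, μ {a} = 0) {q : ℝ} (hq : 0 < q) :
    μ (Ioi 0) ^ (q + 1) / ENNReal.ofReal (q + 1) ≤ ∫⁻ t in Ioi (0 : ℝ), μ (Ioi t) ^ q ∂μ := by
  by_cases htop : μ (Ioi (0 : ℝ)) = ∞
  · have hRHS : ∫⁻ t in Ioi (0 : ℝ), μ (Ioi t) ^ q ∂μ = ∞ := by
      by_contra hne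
      obtain ⟨m, hm⟩ := ENNReal.exists_nat_gt hne
      set A : ℝ := ((m : ℝ) + 1) * (q + 1) with hAdef
      have hA0 : (0 : ℝ) ≤ A := by positivity
      have hA1 : (1 : ℝ) ≤ A := by
        have hm0 : (0:ℝ) ≤ (m:ℝ) := Nat.cast_nonneg m
        nlinarith
      have hcore := core_lemma μ h0 hq hA0 (htop ▸ le_top)
      have h2 : ENNReal.ofReal A ≤ ENNReal.ofReal A ^ (q + 1) := by
        have h1A : (1 : ℝ≥0∞) ≤ ENNReal.ofReal A := by
          rw [← ENNReal.ofReal_one]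
          exact ENNReal.ofReal_le_ofReal hA1
        calc ENNReal.ofReal A = ENNReal.ofReal A ^ (1 : ℝ) := (ENNReal.rpow_one _).symm
          _ ≤ ENNReal.ofReal A ^ (q + 1) :=
            ENNReal.rpow_le_rpow_of_exponent_le h1A (by linarith)
      have h3 : ENNReal.ofReal ((m : ℝ) + 1) ≤ ∫⁻ t in Ioi (0 : ℝ), μ (Ioi t) ^ q ∂μ := by
        refine le_trans ?_ hcore
        rw [ENNReal.le_div_iff_mul_le (Or.inl (ENNReal.ofReal_pos.mpr (by linarith)).ne') (Or.inl ENNReal.ofReal_ne_top)]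
        calc ENNReal.ofReal ((m : ℝ) + 1) * ENNReal.ofReal (q + 1)
            = ENNReal.ofReal A := by rw [← ENNReal.ofReal_mul (by positivity)]
          _ ≤ ENNReal.ofReal A ^ (q + 1) := h2
      have h4 : (m : ℝ≥0∞) < ENNReal.ofReal ((m : ℝ) + 1) := by
        rw [show ((m : ℝ≥0∞)) = ENNReal.ofReal (m : ℝ) by simp, ENNReal.ofReal_lt_ofReal_iff (by positivity)]
        linarith
      exact absurd (h3.trans_lt hm) (not_lt.mpr h4.le)
    rw [hRHS]
    exact le_top
  · have := core_lemma μ h0 hq (A := (μ (Ioi (0:ℝ))).toReal) ENNReal.toReal_nonneg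
      (le_of_eq (ENNReal.ofReal_toReal htop))
    rwa [ENNReal.ofReal_toReal htop] at this

private lemma lint_half (F : ℝ → ℝ≥0∞) (t : ℝ) :
    ∫⁻ s in Ioi (2 * t), F s = 2 * ∫⁻ u in Ioi t, F (2 * u) := by
  have h2 : (2 : ℝ) ≠ 0 := two_ne_zero
  have hemb : MeasurableEmbedding (fun u : ℝ => 2 * u) :=
    (Homeomorph.mulLeft₀ (2 : ℝ) h2).measurableEmbedding
  have hpre : (fun u : ℝ => 2 * u) ⁻¹' (Ioi (2 * t)) = Ioi t := by
    ext u
    simp only [mem_preimage, mem_Ioi]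
    constructor <;> intro h <;> linarith
  have hmap : Measure.map (fun u : ℝ => 2 * u) (volume.restrict (Ioi t))
      = (ENNReal.ofReal |(2 : ℝ)⁻¹|) • volume.restrict (Ioi (2 * t)) := by
    rw [← hpre, ← Measure.restrict_map hemb.measurable measurableSet_Ioi,
      Real.map_volume_mul_left h2, Measure.restrict_smul]
  have hlm := hemb.lintegral_map (f := F) (μ := volume.restrict (Ioi t))
  rw [hmap, lintegral_smul_measure] at hlm
  rw [← hlm, abs_of_pos (by norm_num : (0:ℝ) < (2:ℝ)⁻¹),
    ENNReal.ofReal_inv_of_pos (by norm_num : (0:ℝ) < 2)]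
  rw [smul_eq_mul, ← mul_assoc]
  norm_num
  rw [ENNReal.mul_inv_cancel (by norm_num) ENNReal.ofNat_ne_top, one_mul]

theorem wolff_iteration_lower_bound (n : ℕ) (p α : ℝ) (hp : 1 < p)
    (hα0 : 0 < α) (hα : α < n / p) :
    ∃ c : ℝ≥0∞, 0 < c ∧ c ≠ ⊤ ∧
      ∀ (σ : Measure (EuclideanSpace ℝ (Fin n))), IsLocallyFiniteMeasure σ →
        ∀ (r : ℝ), 0 < r → ∀ x : EuclideanSpace ℝ (Fin n),
          c ^ (r / (p - 1)) * wolff n p α σ x ^ (r / (p - 1) + 1)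
            ≤ wolff n p α (σ.withDensity fun y => wolff n p α σ y ^ r) x := by
  have hp1 : (0 : ℝ) < p - 1 := by linarith
  have hγ : (0 : ℝ) < 1 / (p - 1) := by positivity
  set β : ℝ := (n : ℝ) - α * p with hβ
  set X : ℝ≥0∞ := ENNReal.ofReal (2 ^ β) with hX
  have h2β : (0 : ℝ) < 2 ^ β := Real.rpow_pos_of_pos (by norm_num) _
  have hX0 : X ≠ 0 := (ENNReal.ofReal_pos.mpr h2β).ne'
  have hXtop : X ≠ ⊤ := ENNReal.ofReal_ne_top
  have hXγ0 : X ^ (1 / (p - 1)) ≠ 0 := by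
    simp only [ne_eq, ENNReal.rpow_eq_zero_iff, not_or]
    constructor
    · rintro ⟨h, -⟩; exact hX0 h
    · rintro ⟨h, -⟩; exact hXtop h
  have hXγtop : X ^ (1 / (p - 1)) ≠ ⊤ := ENNReal.rpow_ne_top_of_nonneg hγ.le hXtop
  set κ : ℝ≥0∞ := (X ^ (1 / (p - 1)))⁻¹ with hκ
  have hκ0 : κ ≠ 0 := ENNReal.inv_ne_zero.mpr hXγtop
  have hκtop : κ ≠ ⊤ := ENNReal.inv_ne_top.mpr hXγ0
  refine ⟨κ * ENNReal.ofReal (Real.exp (-1)), ?_, ?_, ?_⟩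
  · exact ENNReal.mul_pos hκ0 (ENNReal.ofReal_pos.mpr (Real.exp_pos _)).ne'
  · exact ENNReal.mul_ne_top hκtop ENNReal.ofReal_ne_top
  intro σ hσ r hr x
  set q : ℝ := r / (p - 1) with hq
  have hq0 : 0 < q := by positivity
  set ν : Measure (EuclideanSpace ℝ (Fin n)) :=
    σ.withDensity fun y => wolff n p α σ y ^ r with hν
  set g : ℝ → ℝ≥0∞ := fun s =>
    (σ (Metric.ball x s) / ENNReal.ofReal (s ^ ((n : ℝ) - α * p))) ^ (1 / (p - 1))
      / ENNReal.ofReal s with hgdef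
  have hballmono : Monotone fun s : ℝ => σ (Metric.ball x s) :=
    fun a b hab => measure_mono (Metric.ball_subset_ball hab)
  have hgm : Measurable g := by
    apply Measurable.div
    · apply Measurable.pow
      · exact hballmono.measurable.div
          (ENNReal.measurable_ofReal.comp (measurable_id.pow measurable_const))
      · exact measurable_const
    · exact ENNReal.measurable_ofReal.comp measurable_id
  set μg : Measure ℝ := volume.withDensity g with hμg
  have hTail : ∀ R : ℝ, wolffTail n p α σ x R = μg (Set.Ioi R) := by
    intro R
    rw [hμg, withDensity_apply _ measurableSet_Ioi]
    rfl
  have hμg0 : ∀ a : ℝ, μg {a} = 0 := by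
    intro a
    rw [hμg, withDensity_apply _ (measurableSet_singleton a)]
    exact setLIntegral_measure_zero _ _ (Real.volume_singleton)
  -- Step 1: comparison of potentials at nearby points
  have step1 : ∀ t : ℝ, 0 < t → ∀ y ∈ Metric.ball x t,
      κ * wolffTail n p α σ x t ≤ wolff n p α σ y := by
    intro t ht y hy
    have hdxy : dist x y < t := by
      rw [dist_comm]
      exact Metric.mem_ball.mp hy
    have h1 : ∫⁻ s in Set.Ioi (2 * t),
        (σ (Metric.ball x (s / 2)) / ENNReal.ofReal (s ^ ((n : ℝ) - α * p))) ^ (1 / (p - 1))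
          / ENNReal.ofReal s ≤ wolff n p α σ y := by
      rw [wolff, wolffTail]
      refine le_trans (setLIntegral_mono' measurableSet_Ioi ?_)
        (lintegral_mono_set (Set.Ioi_subset_Ioi (by linarith)))
      intro s hs
      have hs2 : 2 * t < s := hs
      have hball : Metric.ball x (s / 2) ⊆ Metric.ball y s := by
        apply Metric.ball_subset_ball'
        have : dist x y < s / 2 := by linarith
        linarith
      gcongr
    have h2 := lint_half (fun s => (σ (Metric.ball x (s / 2))
        / ENNReal.ofReal (s ^ ((n : ℝ) - α * p))) ^ (1 / (p - 1)) / ENNReal.ofReal s) t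
    have h3 : ∀ u ∈ Set.Ioi t,
        (σ (Metric.ball x (2 * u / 2)) / ENNReal.ofReal ((2 * u) ^ ((n : ℝ) - α * p)))
            ^ (1 / (p - 1)) / ENNReal.ofReal (2 * u)
          = (X ^ (1 / (p - 1)))⁻¹ * (ENNReal.ofReal 2)⁻¹ * g u := by
      intro u hu
      have hu0 : 0 < u := ht.trans hu
      have h2u : 2 * u / 2 = u := by ring
      have hpow : ((2 * u : ℝ)) ^ ((n : ℝ) - α * p) = 2 ^ β * u ^ ((n : ℝ) - α * p) :=
        Real.mul_rpow (by norm_num) hu0.le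
      rw [h2u, hpow, ENNReal.ofReal_mul h2β.le, ENNReal.ofReal_mul (by norm_num : (0:ℝ) ≤ 2)]
      rw [← hX]
      have e1 : σ (Metric.ball x u) / (X * ENNReal.ofReal (u ^ ((n : ℝ) - α * p)))
          = X⁻¹ * (σ (Metric.ball x u) / ENNReal.ofReal (u ^ ((n : ℝ) - α * p))) := by
        rw [div_eq_mul_inv, ENNReal.mul_inv (Or.inl hX0) (Or.inl hXtop), div_eq_mul_inv]
        exact mul_left_comm _ _ _
      rw [e1, ENNReal.mul_rpow_of_nonneg _ _ hγ.le, ENNReal.inv_rpow]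
      rw [div_eq_mul_inv, ENNReal.mul_inv (Or.inl (by simp)) (Or.inl ENNReal.ofReal_ne_top),
        mul_mul_mul_comm]
      congr 1
    have h4 : ∫⁻ u in Set.Ioi t,
        (σ (Metric.ball x (2 * u / 2)) / ENNReal.ofReal ((2 * u) ^ ((n : ℝ) - α * p)))
          ^ (1 / (p - 1)) / ENNReal.ofReal (2 * u)
        = (X ^ (1 / (p - 1)))⁻¹ * (ENNReal.ofReal 2)⁻¹ * wolffTail n p α σ x t := by
      rw [setLIntegral_congr_fun measurableSet_Ioi h3,
        lintegral_const_mul' _ _ (by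
          exact ENNReal.mul_ne_top (ENNReal.inv_ne_top.mpr hXγ0)
            (ENNReal.inv_ne_top.mpr (by simp)))]
      rfl
    calc κ * wolffTail n p α σ x t
        = 2 * ((X ^ (1 / (p - 1)))⁻¹ * (ENNReal.ofReal 2)⁻¹ * wolffTail n p α σ x t) := by
          rw [hκ]
          rw [show (2 : ℝ≥0∞) * ((X ^ (1 / (p - 1)))⁻¹ * (ENNReal.ofReal 2)⁻¹
              * wolffTail n p α σ x t)
            = (2 * (ENNReal.ofReal 2)⁻¹) * ((X ^ (1 / (p - 1)))⁻¹ * wolffTail n p α σ x t) by ring]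
          rw [ENNReal.ofReal_ofNat, ENNReal.mul_inv_cancel (by norm_num) ENNReal.ofNat_ne_top,
            one_mul]
      _ = 2 * ∫⁻ u in Set.Ioi t,
            (σ (Metric.ball x (2 * u / 2)) / ENNReal.ofReal ((2 * u) ^ ((n : ℝ) - α * p)))
              ^ (1 / (p - 1)) / ENNReal.ofReal (2 * u) := by rw [h4]
      _ = ∫⁻ s in Set.Ioi (2 * t),
            (σ (Metric.ball x (s / 2)) / ENNReal.ofReal (s ^ ((n : ℝ) - α * p)))
              ^ (1 / (p - 1)) / ENNReal.ofReal s := by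
          rw [h2]
      _ ≤ wolff n p α σ y := h1
  -- Step 2: lower bound for the new measure on balls
  have step2 : ∀ t : ℝ, 0 < t →
      (κ * wolffTail n p α σ x t) ^ r * σ (Metric.ball x t) ≤ ν (Metric.ball x t) := by
    intro t ht
    rw [hν, withDensity_apply _ measurableSet_ball]
    calc (κ * wolffTail n p α σ x t) ^ r * σ (Metric.ball x t)
        = ∫⁻ _ in Metric.ball x t, (κ * wolffTail n p α σ x t) ^ r ∂σ :=
          (setLIntegral_const _ _).symm
      _ ≤ ∫⁻ y in Metric.ball x t, wolff n p α σ y ^ r ∂σ :=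
          setLIntegral_mono' measurableSet_ball fun y hy =>
            ENNReal.rpow_le_rpow (step1 t ht y hy) hr.le
  -- Step 3: main chain
  have main : κ ^ q * ∫⁻ t in Set.Ioi (0 : ℝ), μg (Set.Ioi t) ^ q ∂μg ≤ wolff n p α ν x := by
    have hhm : Measurable fun t : ℝ => μg (Set.Ioi t) ^ q := by
      have : Antitone fun t : ℝ => μg (Set.Ioi t) :=
        fun a b hab => measure_mono (Set.Ioi_subset_Ioi hab)
      exact this.measurable.pow measurable_const
    have e1 : ∫⁻ t in Set.Ioi (0 : ℝ), μg (Set.Ioi t) ^ q ∂μg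
        = ∫⁻ t in Set.Ioi (0 : ℝ), g t * μg (Set.Ioi t) ^ q := by
      rw [hμg, restrict_withDensity measurableSet_Ioi,
        lintegral_withDensity_eq_lintegral_mul _ hgm hhm]
      rfl
    rw [e1, ← lintegral_const_mul' _ _ (ENNReal.rpow_ne_top_of_nonneg hq0.le hκtop)]
    rw [wolff, wolffTail]
    refine setLIntegral_mono' measurableSet_Ioi fun t ht => ?_
    have ht0 : (0 : ℝ) < t := ht
    have halg : κ ^ q * (g t * μg (Set.Ioi t) ^ q)
        = ((κ * wolffTail n p α σ x t) ^ r * σ (Metric.ball x t)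
            / ENNReal.ofReal (t ^ ((n : ℝ) - α * p))) ^ (1 / (p - 1)) / ENNReal.ofReal t := by
      rw [mul_div_assoc, ENNReal.mul_rpow_of_nonneg _ _ hγ.le, ← ENNReal.rpow_mul,
        ENNReal.mul_rpow_of_nonneg _ _ (by positivity : (0:ℝ) ≤ r * (1 / (p - 1))),
        mul_one_div, ← hq, hTail t, hgdef]
      simp only []
      simp only [div_eq_mul_inv]
      ring
    rw [halg]
    gcongr
    exact step2 t ht0
  -- Conclusion
  have last := core_lemma' μg hμg0 hq0
  have hWolff : wolff n p α σ x = μg (Set.Ioi 0) := hTail 0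
  calc (κ * ENNReal.ofReal (Real.exp (-1))) ^ q * wolff n p α σ x ^ (q + 1)
      ≤ κ ^ q * (μg (Set.Ioi 0) ^ (q + 1) / ENNReal.ofReal (q + 1)) := by
        rw [hWolff, ENNReal.mul_rpow_of_nonneg _ _ hq0.le, mul_assoc]
        refine mul_le_mul_right ?_ _
        rw [ENNReal.le_div_iff_mul_le (Or.inl (ENNReal.ofReal_pos.mpr (by linarith)).ne')
          (Or.inl ENNReal.ofReal_ne_top)]
        rw [mul_right_comm, ENNReal.ofReal_rpow_of_nonneg (Real.exp_pos _).le hq0.le,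
          ← ENNReal.ofReal_mul (by positivity)]
        calc ENNReal.ofReal (Real.exp (-1) ^ q * (q + 1)) * μg (Set.Ioi 0) ^ (q + 1)
            ≤ 1 * μg (Set.Ioi 0) ^ (q + 1) := by
              refine mul_le_mul_left ?_ _
              refine ENNReal.ofReal_le_one.mpr ?_
              rw [← Real.exp_mul, neg_one_mul, Real.exp_neg]
              rw [inv_mul_le_iff₀ (Real.exp_pos _), mul_one]
              exact Real.add_one_le_exp q
          _ = μg (Set.Ioi 0) ^ (q + 1) := one_mul _
    _ ≤ κ ^ q * ∫⁻ t in Set.Ioi (0 : ℝ), μg (Set.Ioi t) ^ q ∂μg := mul_le_mul_right last _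
    _ ≤ wolff n p α ν x := main
end

section
/- Let $1<p<n$, $0<q<p-1$, $0<\alpha<n/p$, and $\sigma$ a nonnegative locally finite Borel measure on $\mathbb{R}^n$. If $u\in L^q_{loc}(\mathbb{R}^n,d\sigma)$, $u\ge 0$, is nontrivial and satisfies $u\ge\mathbf{W}_{\alpha,p}(u^q\,d\sigma)$ $\sigma$-a.e., then $u\ge C\,(\mathbf{W}_{\alpha,p}\sigma)^{(p-1)/(p-1-q)}$ $\sigma$-a.e., where $C>0$ depends only on $p,q,n,\alpha$. -/
open MeasureTheory ENNReal

/-- sup commutes with rpow for positive exponents, on ℝ≥0∞. -/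
lemma ennreal_iSup_rpow {ι : Sort*} [Nonempty ι] (f : ι → ℝ≥0∞) {e : ℝ} (he : 0 < e) :
    (⨆ i, f i) ^ e = ⨆ i, f i ^ e := by
  apply le_antisymm
  · have h1 : ∀ i, f i ≤ (⨆ j, f j ^ e) ^ e⁻¹ := by
      intro i
      have : f i = (f i ^ e) ^ e⁻¹ := by
        rw [← ENNReal.rpow_mul, mul_inv_cancel₀ he.ne', ENNReal.rpow_one]
      rw [this]
      exact ENNReal.rpow_le_rpow (le_iSup (fun j => f j ^ e) i) (by positivity)
    calc (⨆ i, f i) ^ e ≤ ((⨆ j, f j ^ e) ^ e⁻¹) ^ e :=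
          ENNReal.rpow_le_rpow (iSup_le h1) he.le
      _ = ⨆ j, f j ^ e := by
          rw [← ENNReal.rpow_mul, inv_mul_cancel₀ he.ne', ENNReal.rpow_one]
  · exact iSup_le fun i => ENNReal.rpow_le_rpow (le_iSup f i) he.le

/-- for nonzero b, b^(θ^k) is eventually ≥ 1/2. -/
lemma exists_rpow_half {θ : ℝ} (hθ0 : 0 < θ) (hθ1 : θ < 1) (b : ℝ≥0∞) (hb : b ≠ 0) :
    ∃ k : ℕ, (2 : ℝ≥0∞)⁻¹ ≤ b ^ (θ ^ k) := by
  rcases le_or_gt 1 b with hb1 | hb1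
  · refine ⟨0, ?_⟩
    rw [pow_zero, ENNReal.rpow_one]
    exact le_trans (by norm_num) hb1
  · have hbtop : b ≠ ⊤ := by
      intro h; rw [h] at hb1; exact absurd hb1 (by simp)
    set t := b.toReal with ht_def
    have ht0 : 0 < t := ENNReal.toReal_pos hb hbtop
    have ht1 : t < 1 := by
      rw [ht_def, ← ENNReal.toReal_one]
      exact ENNReal.toReal_strict_mono (by simp) hb1
    have hlogt : Real.log t < 0 := Real.log_neg ht0 ht1
    set ε := Real.log 2 / (-Real.log t) with hε_def
    have hε : 0 < ε := div_pos (Real.log_pos (by norm_num)) (by linarith)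
    obtain ⟨k, hk⟩ := ((tendsto_pow_atTop_nhds_zero_of_lt_one hθ0.le hθ1).eventually_lt_const
      hε).exists
    refine ⟨k, ?_⟩
    have hbk : b = ENNReal.ofReal t := (ENNReal.ofReal_toReal hbtop).symm
    have hθk : 0 < θ ^ k := pow_pos hθ0 k
    rw [hbk, ENNReal.ofReal_rpow_of_pos ht0]
    have h2 : (2 : ℝ≥0∞)⁻¹ = ENNReal.ofReal 2⁻¹ := by
      rw [ENNReal.ofReal_inv_of_pos (by norm_num)]
      norm_num
    rw [h2]
    apply ENNReal.ofReal_le_ofReal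
    rw [Real.rpow_def_of_pos ht0]
    have : -Real.log 2 ≤ θ ^ k * Real.log t := by
      have h1 : θ ^ k * (-Real.log t) ≤ ε * (-Real.log t) := by
        apply mul_le_mul_of_nonneg_right hk.le (by linarith)
      have h2 : ε * (-Real.log t) = Real.log 2 := by
        rw [hε_def]
        field_simp
        exact div_self (by linarith : Real.log t ≠ 0)
      nlinarith
    calc (2:ℝ)⁻¹ = Real.exp (-Real.log 2) := by
          rw [Real.exp_neg, Real.exp_log (by norm_num)]
      _ ≤ Real.exp (θ ^ k * Real.log t) := Real.exp_le_exp.mpr this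
      _ = Real.exp (Real.log t * θ ^ k) := by rw [mul_comm]

/-- change of variables s = 2r on tail integrals. -/
lemma lintegral_Ioi_double (f : ℝ → ℝ≥0∞) (hf : Measurable f) (t : ℝ) :
    ∫⁻ s in Set.Ioi (2*t), f s = 2 * ∫⁻ s in Set.Ioi t, f (2*s) := by
  have h2 : ((2:ℝ))⁻¹ ≠ (0:ℝ) := by norm_num
  have hmap : Measure.map (fun s : ℝ => 2 * s) volume
      = ENNReal.ofReal |(2:ℝ)⁻¹| • volume := Real.map_volume_mul_left (by norm_num)
  have hof : ENNReal.ofReal |(2:ℝ)⁻¹| = 2⁻¹ := by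
    rw [abs_of_pos (by norm_num : (0:ℝ) < 2⁻¹), ENNReal.ofReal_inv_of_pos (by norm_num)]
    norm_num
  calc ∫⁻ s in Set.Ioi (2*t), f s
      = ∫⁻ s, (Set.Ioi (2*t)).indicator f s ∂volume := (lintegral_indicator measurableSet_Ioi f).symm
    _ = 2 * (2⁻¹ * ∫⁻ s, (Set.Ioi (2*t)).indicator f s ∂volume) := by
        rw [← mul_assoc, ENNReal.mul_inv_cancel (by norm_num) (by norm_num), one_mul]
    _ = 2 * ∫⁻ s, (Set.Ioi (2*t)).indicator f s ∂(ENNReal.ofReal |(2:ℝ)⁻¹| • volume) := by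
        rw [lintegral_smul_measure, hof, smul_eq_mul]
    _ = 2 * ∫⁻ s, (Set.Ioi (2*t)).indicator f s ∂(Measure.map (fun s : ℝ => 2 * s) volume) := by
        rw [hmap]
    _ = 2 * ∫⁻ s, (Set.Ioi (2*t)).indicator f (2*s) ∂volume := by
        rw [lintegral_map (hf.indicator measurableSet_Ioi) (measurable_const_mul 2)]
    _ = 2 * ∫⁻ s, (Set.Ioi t).indicator (fun s => f (2*s)) s ∂volume := by
        congr 1
        apply lintegral_congr
        intro s
        by_cases h : t < s
        · rw [Set.indicator_of_mem (by simpa using h),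
            Set.indicator_of_mem (by simp only [Set.mem_Ioi]; linarith)]
        · rw [Set.indicator_of_notMem (by simpa using h),
            Set.indicator_of_notMem (by simp only [Set.mem_Ioi]; intro hc; apply h; linarith)]
    _ = 2 * ∫⁻ s in Set.Ioi t, f (2*s) := by
        rw [lintegral_indicator measurableSet_Ioi]


noncomputable def wkern (n : ℕ) (p α : ℝ) (σ : Measure (EuclideanSpace ℝ (Fin n)))
    (x : EuclideanSpace ℝ (Fin n)) (r : ℝ) : ℝ≥0∞ :=
  (σ (Metric.ball x r) / ENNReal.ofReal (r ^ ((n : ℝ) - α * p))) ^ (1 / (p - 1))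
    / ENNReal.ofReal r

lemma wolffTail_eq_wkern (n : ℕ) (p α : ℝ) (σ : Measure (EuclideanSpace ℝ (Fin n))) (x) (R : ℝ) :
    wolffTail n p α σ x R = ∫⁻ r in Set.Ioi R, wkern n p α σ x r := rfl

lemma measurable_measure_ball {n : ℕ} (σ : Measure (EuclideanSpace ℝ (Fin n))) (x) :
    Measurable fun r : ℝ => σ (Metric.ball x r) :=
  Monotone.measurable fun _ _ hab => measure_mono (Metric.ball_subset_ball hab)

lemma wkern_measurable (n : ℕ) (p α : ℝ) (σ : Measure (EuclideanSpace ℝ (Fin n))) (x) :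
    Measurable (wkern n p α σ x) := by
  unfold wkern
  apply Measurable.div
  · exact ENNReal.continuous_rpow_const.measurable.comp
      ((measurable_measure_ball σ x).div (by fun_prop))
  · fun_prop

lemma wolffTail_anti (n : ℕ) (p α : ℝ) (σ : Measure (EuclideanSpace ℝ (Fin n))) (x) :
    Antitone (wolffTail n p α σ x) :=
  fun _ _ hab => lintegral_mono_set (Set.Ioi_subset_Ioi hab)

lemma wolff_shift {n : ℕ} {p α : ℝ} (hp : 1 < p) (hη : 0 ≤ (n:ℝ) - α * p)
    (σ' : Measure (EuclideanSpace ℝ (Fin n))) {x y : EuclideanSpace ℝ (Fin n)} {t : ℝ}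
    (ht : 0 < t) (hy : y ∈ Metric.ball x t) :
    (ENNReal.ofReal (2 ^ (((n:ℝ) - α * p) * (1 / (p - 1)))))⁻¹ * wolffTail n p α σ' x t
      ≤ wolff n p α σ' y := by
  set η := (n:ℝ) - α * p with hη_def
  set β := 1 / (p - 1) with hβ_def
  have hβ0 : 0 < β := div_pos one_pos (by linarith)
  set κ := (ENNReal.ofReal (2 ^ (η * β)))⁻¹ with hκ_def
  have hκtop : κ ≠ ⊤ := by
    rw [hκ_def]
    exact ENNReal.inv_ne_top.mpr (by simp only [ne_eq, ENNReal.ofReal_eq_zero, not_le]; positivity)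
  have hpoint : ∀ s : ℝ, s ∈ Set.Ioi t →
      2⁻¹ * κ * wkern n p α σ' x s ≤ wkern n p α σ' y (2 * s) := by
    intro s hs
    rw [Set.mem_Ioi] at hs
    have hs0 : 0 < s := lt_trans ht hs
    have hball : Metric.ball x s ⊆ Metric.ball y (2 * s) := by
      intro z hz
      rw [Metric.mem_ball] at hz ⊢
      calc dist z y ≤ dist z x + dist x y := dist_triangle z x y
        _ < s + t := add_lt_add hz (by rw [dist_comm]; exact Metric.mem_ball.mp hy)
        _ ≤ 2 * s := by nlinarith
    have hden : ENNReal.ofReal ((2*s) ^ η) = ENNReal.ofReal (2 ^ η) * ENNReal.ofReal (s ^ η) := by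
      rw [Real.mul_rpow (by norm_num) hs0.le, ENNReal.ofReal_mul (by positivity)]
    have hden2 : ENNReal.ofReal (2*s) = 2 * ENNReal.ofReal s := by
      rw [ENNReal.ofReal_mul (by norm_num)]
      norm_num
    unfold wkern
    rw [hden, hden2]
    set A := σ' (Metric.ball y (2*s))
    set A' := σ' (Metric.ball x s)
    set B := ENNReal.ofReal (s ^ η)
    set E := ENNReal.ofReal s
    set c2 := ENNReal.ofReal (2 ^ η) with hc2
    have hc2_0 : c2 ≠ 0 := by
      rw [hc2]; simp only [ne_eq, ENNReal.ofReal_eq_zero, not_le]; positivity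
    have hc2_top : c2 ≠ ⊤ := ENNReal.ofReal_ne_top
    have key1 : A' / (c2 * B) = c2⁻¹ * (A' / B) := by
      rw [div_eq_mul_inv, ENNReal.mul_inv (Or.inl hc2_0) (Or.inl hc2_top), div_eq_mul_inv]
      ring
    have key2 : (c2⁻¹ * (A'/B)) ^ β = κ * (A'/B) ^ β := by
      rw [ENNReal.mul_rpow_of_nonneg _ _ hβ0.le, ENNReal.inv_rpow]
      congr 2
      rw [hc2, ENNReal.ofReal_rpow_of_pos (by positivity), ← Real.rpow_mul (by norm_num)]
    have hsplitE : ∀ Z : ℝ≥0∞, Z / (2*E) = 2⁻¹ * (Z / E) := by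
      intro Z
      rw [div_eq_mul_inv, ENNReal.mul_inv (Or.inl (by norm_num)) (Or.inl (by norm_num)),
        div_eq_mul_inv]
      ring
    calc 2⁻¹ * κ * ((A' / B) ^ β / E)
        = (c2⁻¹ * (A'/B)) ^ β / (2 * E) := by
          rw [key2, hsplitE]
          simp only [div_eq_mul_inv]
          ring
      _ = (A' / (c2 * B)) ^ β / (2 * E) := by rw [key1]
      _ ≤ (A / (c2 * B)) ^ β / (2 * E) := by
          gcongr
          exact measure_mono hball
  have h1 : wolffTail n p α σ' y (2*t) ≤ wolff n p α σ' y :=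
    wolffTail_anti n p α σ' y (by linarith)
  have h2 : wolffTail n p α σ' y (2*t) = 2 * ∫⁻ s in Set.Ioi t, wkern n p α σ' y (2*s) := by
    rw [wolffTail_eq_wkern]
    exact lintegral_Ioi_double _ (wkern_measurable n p α σ' y) t
  have h3 : κ * wolffTail n p α σ' x t ≤ wolffTail n p α σ' y (2*t) := by
    rw [h2]
    have : ∫⁻ s in Set.Ioi t, 2⁻¹ * κ * wkern n p α σ' x s
        ≤ ∫⁻ s in Set.Ioi t, wkern n p α σ' y (2*s) := by
      apply lintegral_mono_ae
      rw [ae_restrict_iff' measurableSet_Ioi]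
      exact ae_of_all _ hpoint
    rw [lintegral_const_mul' _ _ (by
      exact ENNReal.mul_ne_top (by norm_num) hκtop)] at this
    calc κ * wolffTail n p α σ' x t
        = 2 * (2⁻¹ * κ * wolffTail n p α σ' x t) := by
          rw [← mul_assoc, ← mul_assoc, ENNReal.mul_inv_cancel (by norm_num) (by norm_num),
            one_mul]
      _ ≤ 2 * ∫⁻ s in Set.Ioi t, wkern n p α σ' y (2*s) := by
          apply mul_le_mul_right
          rw [mul_assoc] at this ⊢
          exact this
  exact le_trans h3 h1

lemma tailJ (μ : Measure ℝ) (hat : ∀ a : ℝ, μ {a} = 0) {m : ℝ} (hm : 0 ≤ m) :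
    (μ Set.univ / 2) ^ (m + 1) ≤ ∫⁻ t, μ (Set.Ioi t) ^ m ∂μ := by
  set F : ℝ → ℝ≥0∞ := fun t => μ (Set.Ioi t) with hF
  have hanti : Antitone F := fun a b hab => measure_mono (Set.Ioi_subset_Ioi hab)
  have hsplit : ∀ t : ℝ, μ Set.univ = μ (Set.Iio t) + μ {t} + F t := by
    intro t
    have h1 : Set.univ = Set.Iio t ∪ {t} ∪ Set.Ioi t := by
      ext y
      simp only [Set.mem_univ, Set.mem_union, Set.mem_Iio, Set.mem_singleton_iff, Set.mem_Ioi,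
        true_iff]
      rcases lt_trichotomy y t with h | h | h <;> tauto
    have d1 : Disjoint (Set.Iio t) {t} := by
      rw [Set.disjoint_left]; intro y hy hy'
      simp only [Set.mem_singleton_iff] at hy'
      exact absurd hy' (ne_of_lt hy)
    have d2 : Disjoint (Set.Iio t ∪ {t}) (Set.Ioi t) := by
      rw [Set.disjoint_left]; rintro y (hy | hy) hy'
      · exact absurd (lt_trans hy hy') (lt_irrefl y)
      · simp only [Set.mem_singleton_iff] at hy
        subst hy; exact lt_irrefl y hy'
    calc μ Set.univ = μ (Set.Iio t ∪ {t} ∪ Set.Ioi t) := by rw [← h1]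
      _ = μ (Set.Iio t ∪ {t}) + μ (Set.Ioi t) := measure_union d2 measurableSet_Ioi
      _ = μ (Set.Iio t) + μ {t} + F t := by
          rw [measure_union d1 (measurableSet_singleton t)]
  have hrc : ∀ t : ℝ, F t ≤ ⨆ k : ℕ, μ (Set.Ioi (t + 1/(k+1))) := by
    intro t
    have hU : Set.Ioi t = ⋃ k : ℕ, Set.Ioi (t + 1/((k:ℝ)+1)) := by
      ext y
      simp only [Set.mem_Ioi, Set.mem_iUnion]
      constructor
      · intro h
        obtain ⟨k, hk⟩ := exists_nat_one_div_lt (sub_pos.mpr h)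
        exact ⟨k, by linarith⟩
      · rintro ⟨k, hk⟩
        have h0 : 0 < 1/((k:ℝ)+1) := by positivity
        linarith
    have hmono : Monotone (fun k : ℕ => Set.Ioi (t + 1/((k:ℝ)+1))) := by
      intro a b hab
      apply Set.Ioi_subset_Ioi
      have ha : (0:ℝ) < (a:ℝ) + 1 := by positivity
      have : 1/((b:ℝ)+1) ≤ 1/((a:ℝ)+1) := by
        apply one_div_le_one_div_of_le ha
        exact_mod_cast by linarith [ (Nat.cast_le (α := ℝ)).mpr hab ]
      linarith
    calc F t = μ (⋃ k : ℕ, Set.Ioi (t + 1/((k:ℝ)+1))) := by rw [hF]; simp only; rw [hU]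
      _ = ⨆ k : ℕ, μ (Set.Ioi (t + 1/((k:ℝ)+1))) := hmono.measure_iUnion
      _ ≤ ⨆ k : ℕ, μ (Set.Ioi (t + 1/((k:ℝ)+1))) := le_rfl
  have hunivU : μ Set.univ = ⨆ k : ℕ, F (-(k:ℝ)) := by
    have hU : Set.univ = ⋃ k : ℕ, Set.Ioi (-(k:ℝ)) := by
      ext y
      simp only [Set.mem_univ, Set.mem_iUnion, Set.mem_Ioi, true_iff]
      obtain ⟨k, hk⟩ := exists_nat_gt (-y)
      exact ⟨k, by linarith⟩
    have hmono : Monotone (fun k : ℕ => Set.Ioi (-(k:ℝ))) := by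
      intro a b hab
      apply Set.Ioi_subset_Ioi
      simp only [neg_le_neg_iff]
      exact_mod_cast hab
    rw [hU]
    exact hmono.measure_iUnion
  -- m = 0 case
  rcases eq_or_ne m 0 with hm0 | hm0
  · subst hm0
    simp only [ENNReal.rpow_zero, zero_add, ENNReal.rpow_one, lintegral_one]
    exact ENNReal.half_le_self
  have hm0' : 0 < m := lt_of_le_of_ne hm (Ne.symm hm0)
  have hm1 : (0:ℝ) < m + 1 := by linarith
  rcases eq_or_ne (μ Set.univ) 0 with hA0 | hA0
  · rw [hA0, ENNReal.zero_div, ENNReal.zero_rpow_of_pos hm1]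
    exact zero_le
  rcases eq_or_ne (μ Set.univ) ⊤ with hAt | hAt
  · -- integral is ⊤
    have hgoal : (⊤:ℝ≥0∞) ≤ ∫⁻ t, F t ^ m ∂μ := by
      by_cases hex : ∃ a, 1 ≤ F a ∧ F a ≠ ⊤
      · obtain ⟨a, ha1, hat'⟩ := hex
        have hIio : μ (Set.Iio a) = ⊤ := by
          by_contra hne
          have := hsplit a
          rw [hAt, hat a, add_zero] at this
          exact (ENNReal.add_ne_top.mpr ⟨hne, hat'⟩) this.symm
        calc (⊤:ℝ≥0∞) = 1 * μ (Set.Iio a) := by rw [one_mul, hIio]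
          _ = ∫⁻ _ in Set.Iio a, 1 ∂μ := by rw [setLIntegral_const, one_mul]
          _ ≤ ∫⁻ t in Set.Iio a, F t ^ m ∂μ := by
              apply lintegral_mono_ae
              rw [ae_restrict_iff' measurableSet_Iio]
              apply ae_of_all
              intro t ht
              calc (1:ℝ≥0∞) = 1 ^ m := (ENNReal.one_rpow m).symm
                _ ≤ F t ^ m := ENNReal.rpow_le_rpow (le_trans ha1 (hanti ht.le)) hm
          _ ≤ ∫⁻ t, F t ^ m ∂μ := setLIntegral_le_lintegral _ _
      · push_neg at hex
        by_cases hall : ∀ a : ℝ, F a < 1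
        · exfalso
          have hle : μ Set.univ ≤ 1 := by
            rw [hunivU]
            exact iSup_le fun k => (hall _).le
          rw [hAt] at hle
          simp at hle
        · push_neg at hall
          obtain ⟨a₁, ha₁⟩ := hall
          have ha₁top : F a₁ = ⊤ := hex a₁ ha₁
          by_cases hS : ∃ s, F s < 1
          · obtain ⟨s₀, hs₀⟩ := hS
            set S := {s : ℝ | F s < 1} with hS_def
            have hbdd : BddBelow S := by
              refine ⟨a₁, fun s hs => ?_⟩
              by_contra hlt
              push_neg at hlt
              have : F a₁ ≤ F s := hanti hlt.le
              rw [ha₁top] at this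
              simp only [top_le_iff] at this
              rw [hS_def] at hs
              simp only [Set.mem_setOf_eq, this] at hs
              exact absurd hs (by simp)
            set t₁ := sInf S with ht₁_def
            have ht₁le : F t₁ ≤ 1 := by
              refine le_trans (hrc t₁) (iSup_le fun k => ?_)
              have hlt : t₁ < t₁ + 1/((k:ℝ)+1) := lt_add_of_pos_right t₁ (by positivity)
              obtain ⟨s, hsS, hs⟩ := (csInf_lt_iff hbdd ⟨s₀, hs₀⟩).mp hlt
              exact le_trans (measure_mono (Set.Ioi_subset_Ioi hs.le)) hsS.le
            have hmem : ∀ t, t < t₁ → F t = ⊤ := by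
              intro t ht
              have htS : t ∉ S := fun h => absurd (csInf_le hbdd h) (not_le.mpr ht)
              have h1 : ¬ F t < 1 := htS
              exact hex t (not_lt.mp h1)
            have hIio : μ (Set.Iio t₁) = ⊤ := by
              by_contra hne
              have := hsplit t₁
              rw [hAt, hat t₁, add_zero] at this
              exact (ENNReal.add_ne_top.mpr ⟨hne, by
                intro hc; rw [hc] at ht₁le; exact absurd ht₁le (by simp)⟩) this.symm
            calc (⊤:ℝ≥0∞) = ⊤ * μ (Set.Iio t₁) := by rw [hIio, ENNReal.top_mul_top]
              _ = ∫⁻ _ in Set.Iio t₁, ⊤ ∂μ := by rw [setLIntegral_const]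
              _ ≤ ∫⁻ t in Set.Iio t₁, F t ^ m ∂μ := by
                  apply lintegral_mono_ae
                  rw [ae_restrict_iff' measurableSet_Iio]
                  apply ae_of_all
                  intro t ht
                  rw [← ENNReal.top_rpow_of_pos hm0', hmem t ht]
              _ ≤ ∫⁻ t, F t ^ m ∂μ := setLIntegral_le_lintegral _ _
          · push_neg at hS
            calc (⊤:ℝ≥0∞) = 1 * μ Set.univ := by rw [one_mul, hAt]
              _ = ∫⁻ _, 1 ∂μ := by rw [lintegral_one]; rw [one_mul]
              _ ≤ ∫⁻ t, F t ^ m ∂μ := by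
                  apply lintegral_mono
                  intro t
                  calc (1:ℝ≥0∞) = 1 ^ m := (ENNReal.one_rpow m).symm
                    _ ≤ F t ^ m := ENNReal.rpow_le_rpow (hS t) hm
    refine le_trans ?_ hgoal
    exact le_top
  -- finite positive case
  · have hA2ne0 : μ Set.univ / 2 ≠ 0 := by
      simp only [ne_eq, ENNReal.div_eq_zero_iff]
      push_neg
      exact ⟨hA0, by norm_num⟩
    have hA2net : μ Set.univ / 2 ≠ ⊤ := by
      exact ne_top_of_le_ne_top hAt ENNReal.half_le_self
    have hsplitpow : (μ Set.univ / 2) ^ (m+1) = (μ Set.univ / 2) ^ m * (μ Set.univ / 2) := by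
      rw [ENNReal.rpow_add m 1 hA2ne0 hA2net, ENNReal.rpow_one]
    by_cases hS : ∃ t, F t ≤ μ Set.univ / 2
    · obtain ⟨t₀, ht₀⟩ := hS
      set S := {t : ℝ | F t ≤ μ Set.univ / 2} with hS_def
      have hBdd : BddBelow S := by
        by_contra hnb
        have hle : ∀ k:ℕ, F (-(k:ℝ)) ≤ μ Set.univ / 2 := by
          intro k
          obtain ⟨s, hsS, hs⟩ := not_bddBelow_iff.mp hnb (-(k:ℝ))
          exact le_trans (hanti hs.le) hsS
        have : μ Set.univ ≤ μ Set.univ / 2 :=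
          le_trans (le_of_eq hunivU) (iSup_le hle)
        exact absurd this (not_le.mpr (ENNReal.half_lt_self hA0 hAt))
      set tstar := sInf S with htstar_def
      have hFts : F tstar ≤ μ Set.univ / 2 := by
        refine le_trans (hrc tstar) (iSup_le fun k => ?_)
        have hlt : tstar < tstar + 1/((k:ℝ)+1) := lt_add_of_pos_right tstar (by positivity)
        obtain ⟨s, hsS, hs⟩ := (csInf_lt_iff hBdd ⟨t₀, ht₀⟩).mp hlt
        exact le_trans (measure_mono (Set.Ioi_subset_Ioi hs.le)) hsS
      have hlow : ∀ t, t < tstar → μ Set.univ / 2 ≤ F t := by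
        intro t ht
        have htS : t ∉ S := fun h => absurd (csInf_le hBdd h) (not_le.mpr ht)
        exact (not_le.mp htS).le
      have hIio : μ Set.univ / 2 ≤ μ (Set.Iio tstar) := by
        have hsp := hsplit tstar
        rw [hat tstar, add_zero] at hsp
        have h1 : μ Set.univ ≤ μ (Set.Iio tstar) + μ Set.univ / 2 :=
          hsp.trans_le (add_le_add_right hFts _)
        have h2 : μ Set.univ / 2 + μ Set.univ / 2 ≤ μ (Set.Iio tstar) + μ Set.univ / 2 := by
          rw [ENNReal.add_halves]; exact h1
        exact (ENNReal.add_le_add_iff_right hA2net).mp h2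
      calc (μ Set.univ / 2) ^ (m+1) = (μ Set.univ / 2) ^ m * (μ Set.univ / 2) := hsplitpow
        _ ≤ (μ Set.univ / 2) ^ m * μ (Set.Iio tstar) := mul_le_mul_right hIio _
        _ = ∫⁻ _ in Set.Iio tstar, (μ Set.univ / 2) ^ m ∂μ := (setLIntegral_const _ _).symm
        _ ≤ ∫⁻ t in Set.Iio tstar, F t ^ m ∂μ := by
            apply lintegral_mono_ae
            rw [ae_restrict_iff' measurableSet_Iio]
            exact ae_of_all _ fun t ht => ENNReal.rpow_le_rpow (hlow t ht) hm
        _ ≤ ∫⁻ t, F t ^ m ∂μ := setLIntegral_le_lintegral _ _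
    · push_neg at hS
      calc (μ Set.univ / 2) ^ (m+1) = (μ Set.univ / 2) ^ m * (μ Set.univ / 2) := hsplitpow
        _ ≤ (μ Set.univ / 2) ^ m * μ Set.univ := mul_le_mul_right ENNReal.half_le_self _
        _ = ∫⁻ _, (μ Set.univ / 2) ^ m ∂μ := (lintegral_const _).symm
        _ ≤ ∫⁻ t, F t ^ m ∂μ := lintegral_mono fun t => ENNReal.rpow_le_rpow (hS t).le hm

lemma tail_const_lower {n : ℕ} {p α : ℝ} (hp : 1 < p) (hη : 0 < (n:ℝ) - α * p)
    (ν : Measure (EuclideanSpace ℝ (Fin n))) (x : EuclideanSpace ℝ (Fin n)) {d : ℝ} (hd : 0 < d)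
    {mm : ℝ≥0∞} (hmt : mm ≠ ⊤) (hmb : ∀ s : ℝ, d < s → mm ≤ ν (Metric.ball x s)) :
    mm ^ (1/(p-1))
      * ENNReal.ofReal (d ^ (-(((n:ℝ) - α * p) * (1/(p-1)))) / (((n:ℝ) - α * p) * (1/(p-1))))
      ≤ wolffTail n p α ν x d := by
  set η := (n:ℝ) - α * p with hη_def
  set β := 1/(p-1) with hβ_def
  have hβ0 : 0 < β := div_pos one_pos (by linarith)
  have hηβ : 0 < η * β := mul_pos hη hβ0
  have hpoint : ∀ s : ℝ, s ∈ Set.Ioi d →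
      mm ^ β * ENNReal.ofReal (s ^ (-(η*β)-1)) ≤ wkern n p α ν x s := by
    intro s hs
    rw [Set.mem_Ioi] at hs
    have hs0 : 0 < s := lt_trans hd hs
    have hB : ENNReal.ofReal (s ^ η) ^ β = ENNReal.ofReal (s ^ (η*β)) := by
      rw [ENNReal.ofReal_rpow_of_pos (by positivity), ← Real.rpow_mul hs0.le]
    have halg : (mm / ENNReal.ofReal (s ^ η)) ^ β / ENNReal.ofReal s
        = mm ^ β * ENNReal.ofReal (s ^ (-(η*β)-1)) := by
      rw [ENNReal.div_rpow_of_nonneg _ _ hβ0.le, hB]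
      rw [div_eq_mul_inv, div_eq_mul_inv, mul_assoc]
      congr 1
      rw [← ENNReal.mul_inv (Or.inl (by simp only [ne_eq, ENNReal.ofReal_eq_zero, not_le]; positivity))
        (Or.inl ENNReal.ofReal_ne_top)]
      rw [← ENNReal.ofReal_mul (by positivity)]
      rw [← Real.rpow_add_one hs0.ne' (η*β)]
      rw [← ENNReal.ofReal_inv_of_pos (by positivity)]
      rw [← Real.rpow_neg hs0.le]
      congr 1
      ring
    rw [← halg]
    unfold wkern
    gcongr
    exact hmb s hs
  have hintR : ∫ s in Set.Ioi d, s ^ (-(η*β)-1) = d ^ (-(η*β)) / (η*β) := by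
    rw [integral_Ioi_rpow_of_lt (by linarith) hd]
    have h1 : -(η*β)-1 + 1 = -(η*β) := by ring
    rw [h1]
    rw [neg_div, div_neg, neg_neg]
  have hint : ∫⁻ s in Set.Ioi d, ENNReal.ofReal (s ^ (-(η*β)-1))
      = ENNReal.ofReal (d ^ (-(η*β)) / (η*β)) := by
    rw [← hintR]
    rw [← ofReal_integral_eq_lintegral_ofReal
      (integrableOn_Ioi_rpow_of_lt (by linarith) hd)
      ((ae_restrict_iff' measurableSet_Ioi).mpr (ae_of_all _ fun s hs =>
        Real.rpow_nonneg (le_of_lt (lt_trans hd hs)) _))]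
  calc mm ^ β * ENNReal.ofReal (d ^ (-(η*β)) / (η*β))
      = mm ^ β * ∫⁻ s in Set.Ioi d, ENNReal.ofReal (s ^ (-(η*β)-1)) := by rw [hint]
    _ = ∫⁻ s in Set.Ioi d, mm ^ β * ENNReal.ofReal (s ^ (-(η*β)-1)) :=
        (lintegral_const_mul' _ _ (ENNReal.rpow_ne_top_of_nonneg hβ0.le hmt)).symm
    _ ≤ ∫⁻ s in Set.Ioi d, wkern n p α ν x s := by
        apply lintegral_mono_ae
        rw [ae_restrict_iff' measurableSet_Ioi]
        exact ae_of_all _ hpoint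
    _ = wolffTail n p α ν x d := (wolffTail_eq_wkern n p α ν x d).symm

lemma selfimp {n : ℕ} {p α : ℝ} (σ' : Measure (EuclideanSpace ℝ (Fin n)))
    (x : EuclideanSpace ℝ (Fin n)) {m : ℝ} (hm : 0 ≤ m) :
    (wolff n p α σ' x / 2) ^ (m+1)
      ≤ ∫⁻ r in Set.Ioi (0:ℝ), wolffTail n p α σ' x r ^ m * wkern n p α σ' x r := by
  set h := wkern n p α σ' x with hh
  set μ := (volume.restrict (Set.Ioi (0:ℝ))).withDensity h with hμ
  have hhm : Measurable h := wkern_measurable n p α σ' x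
  have hTanti : Antitone (wolffTail n p α σ' x) := wolffTail_anti n p α σ' x
  have hTm : Measurable (wolffTail n p α σ' x) := hTanti.measurable
  have hμIoi : ∀ r : ℝ, 0 ≤ r → μ (Set.Ioi r) = wolffTail n p α σ' x r := by
    intro r hr
    rw [hμ, withDensity_apply _ measurableSet_Ioi, Measure.restrict_restrict measurableSet_Ioi,
      Set.Ioi_inter_Ioi, sup_eq_left.mpr hr]
    rfl
  have hμuniv : μ Set.univ = wolff n p α σ' x := by
    rw [hμ, withDensity_apply _ MeasurableSet.univ, Measure.restrict_univ]
    rfl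
  have hatom : ∀ a : ℝ, μ {a} = 0 := by
    intro a
    rw [hμ, withDensity_apply _ (measurableSet_singleton a),
      Measure.restrict_restrict (measurableSet_singleton a)]
    apply setLIntegral_measure_zero
    exact measure_mono_null Set.inter_subset_left Real.volume_singleton
  have hcompl : μ (Set.Iic (0:ℝ)) = 0 := by
    rw [hμ, withDensity_apply _ measurableSet_Iic,
      Measure.restrict_restrict measurableSet_Iic]
    apply setLIntegral_measure_zero
    have : Set.Iic (0:ℝ) ∩ Set.Ioi 0 = ∅ := by
      ext z
      simp only [Set.mem_inter_iff, Set.mem_Iic, Set.mem_Ioi, Set.mem_empty_iff_false, iff_false,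
        not_and, not_lt]
      intro hz; exact hz
    rw [this]
    simp
  calc (wolff n p α σ' x / 2) ^ (m+1)
      = (μ Set.univ / 2) ^ (m+1) := by rw [hμuniv]
    _ ≤ ∫⁻ t, μ (Set.Ioi t) ^ m ∂μ := tailJ μ hatom hm
    _ ≤ ∫⁻ t, wolffTail n p α σ' x t ^ m ∂μ := by
        apply lintegral_mono_ae
        have hae : ∀ᵐ t ∂μ, t ∈ Set.Ioi (0:ℝ) := by
          rw [ae_iff]
          apply measure_mono_null _ hcompl
          intro t ht
          simp only [Set.mem_Ioi, Set.mem_setOf_eq, not_lt] at ht ⊢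
          exact ht
        filter_upwards [hae] with t ht
        rw [hμIoi t (le_of_lt ht)]
    _ = ∫⁻ t, (h * fun t => wolffTail n p α σ' x t ^ m) t ∂(volume.restrict (Set.Ioi 0)) := by
        have hgm : Measurable fun t => wolffTail n p α σ' x t ^ m :=
          ENNReal.continuous_rpow_const.measurable.comp hTm
        rw [hμ]
        exact lintegral_withDensity_eq_lintegral_mul (volume.restrict (Set.Ioi (0:ℝ))) hhm hgm
    _ = ∫⁻ r in Set.Ioi (0:ℝ), wolffTail n p α σ' x r ^ m * h r := by
        apply lintegral_congr
        intro r
        simp only [Pi.mul_apply]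
        ring

lemma wolff_step {n : ℕ} {p q α : ℝ} (hp : 1 < p) (hq0 : 0 < q) (hη : 0 < (n:ℝ) - α * p)
    (σ' ν : Measure (EuclideanSpace ℝ (Fin n))) (x : EuclideanSpace ℝ (Fin n))
    {c : ℝ≥0∞} (hc : c ≠ ⊤) {δ : ℝ} (hδ : 0 ≤ δ)
    (hlow : ∀ r : ℝ, 0 < r →
      (c * ((ENNReal.ofReal (2 ^ (((n:ℝ) - α * p) * (1/(p-1)))))⁻¹
          * wolffTail n p α σ' x r) ^ δ) ^ q * σ' (Metric.ball x r)
        ≤ ν (Metric.ball x r)) :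
    c ^ (q * (1/(p-1)))
      * ((ENNReal.ofReal (2 ^ (((n:ℝ) - α * p) * (1/(p-1)))))⁻¹) ^ (δ * (q * (1/(p-1))))
      * (wolff n p α σ' x / 2) ^ (δ * (q * (1/(p-1))) + 1)
      ≤ wolff n p α ν x := by
  set η := (n:ℝ) - α * p with hη_def
  set β := 1/(p-1) with hβ_def
  have hβ0 : 0 < β := div_pos one_pos (by linarith)
  have hqβ : 0 < q * β := mul_pos hq0 hβ0
  set κ := (ENNReal.ofReal (2 ^ (η * β)))⁻¹ with hκ_def
  have hκtop : κ ≠ ⊤ := by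
    rw [hκ_def]
    exact ENNReal.inv_ne_top.mpr (by simp only [ne_eq, ENNReal.ofReal_eq_zero, not_le]; positivity)
  set K := c ^ (q*β) * κ ^ (δ*(q*β)) with hK_def
  have hKtop : K ≠ ⊤ := by
    rw [hK_def]
    exact ENNReal.mul_ne_top (ENNReal.rpow_ne_top_of_nonneg hqβ.le hc)
      (ENNReal.rpow_ne_top_of_nonneg (by positivity) hκtop)
  have hpoint : ∀ r : ℝ, r ∈ Set.Ioi (0:ℝ) →
      K * (wolffTail n p α σ' x r ^ (δ*(q*β)) * wkern n p α σ' x r)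
        ≤ wkern n p α ν x r := by
    intro r hr
    rw [Set.mem_Ioi] at hr
    set T := wolffTail n p α σ' x r with hT
    set S := σ' (Metric.ball x r) with hS
    set B := ENNReal.ofReal (r ^ η) with hB
    set E := ENNReal.ofReal r with hE
    have hexp : ((c * (κ * T) ^ δ) ^ q * S / B) ^ β / E
        = K * (T ^ (δ*(q*β)) * ((S / B) ^ β / E)) := by
      rw [mul_div_assoc]
      rw [ENNReal.mul_rpow_of_nonneg _ _ hβ0.le]
      rw [← ENNReal.rpow_mul]
      rw [ENNReal.mul_rpow_of_nonneg _ _ (by positivity : (0:ℝ) ≤ q*β)]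
      rw [← ENNReal.rpow_mul]
      rw [ENNReal.mul_rpow_of_nonneg _ _ (by positivity : (0:ℝ) ≤ δ*(q*β))]
      rw [hK_def, mul_div_assoc]
      ring
    have hmono : ((c * (κ * T) ^ δ) ^ q * S / B) ^ β / E ≤ wkern n p α ν x r := by
      unfold wkern
      gcongr
      exact hlow r hr
    have hw : wkern n p α σ' x r = (S/B) ^ β / E := rfl
    rw [hw, ← hexp]
    exact hmono
  have h1 : ∫⁻ r in Set.Ioi (0:ℝ), K * (wolffTail n p α σ' x r ^ (δ*(q*β)) * wkern n p α σ' x r)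
      ≤ wolff n p α ν x := by
    rw [wolff, wolffTail_eq_wkern]
    apply lintegral_mono_ae
    rw [ae_restrict_iff' measurableSet_Ioi]
    exact ae_of_all _ hpoint
  rw [lintegral_const_mul' _ _ hKtop] at h1
  calc c ^ (q*β) * κ ^ (δ*(q*β)) * (wolff n p α σ' x / 2) ^ (δ*(q*β) + 1)
      = K * (wolff n p α σ' x / 2) ^ (δ*(q*β) + 1) := by rw [hK_def]
    _ ≤ K * ∫⁻ r in Set.Ioi (0:ℝ),
          wolffTail n p α σ' x r ^ (δ*(q*β)) * wkern n p α σ' x r := by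
        apply mul_le_mul_right
        exact selfimp σ' x (by positivity)
    _ ≤ wolff n p α ν x := h1

theorem supersolution_lower_bound (n : ℕ) (p q α : ℝ) (hp : 1 < p) (hpn : p < n)
    (hq0 : 0 < q) (hq : q < p - 1) (hα0 : 0 < α) (hα : α < n / p) :
    ∃ C : ℝ≥0∞, 0 < C ∧ C ≠ ⊤ ∧
      ∀ (σ : Measure (EuclideanSpace ℝ (Fin n))), IsLocallyFiniteMeasure σ →
        ∀ u : EuclideanSpace ℝ (Fin n) → ℝ≥0∞, Measurable u →
          (∀ (x : EuclideanSpace ℝ (Fin n)) (R : ℝ), 0 < R →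
            ∫⁻ y in Metric.ball x R, u y ^ q ∂σ ≠ ⊤) →
          0 < ∫⁻ y, u y ^ q ∂σ →
          (∀ᵐ x ∂σ, wolff n p α (σ.withDensity fun y => u y ^ q) x ≤ u x) →
          ∀ᵐ x ∂σ, C * wolff n p α σ x ^ ((p - 1) / (p - 1 - q)) ≤ u x := by
  have hp1 : 0 < p - 1 := by linarith
  have hp0 : 0 < p := by linarith
  set η := (n:ℝ) - α * p with hη_def
  have hη : 0 < η := by
    have h1 : α * p < n := by rwa [← lt_div_iff₀ hp0]
    rw [hη_def]; linarith
  set β := 1/(p-1) with hβ_def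
  have hβ0 : 0 < β := div_pos one_pos hp1
  set θ := q * β with hθ_def
  have hθ0 : 0 < θ := mul_pos hq0 hβ0
  have hθ1 : θ < 1 := by
    rw [hθ_def, hβ_def, mul_one_div]
    exact (div_lt_one hp1).mpr hq
  have hpq : 0 < p - 1 - q := by linarith
  set γ := (p-1)/(p-1-q) with hγ_def
  have hγpos : 0 < γ := div_pos hp1 hpq
  have hγθ : γ * θ = γ - 1 := by
    rw [hγ_def, hθ_def, hβ_def]
    have h1 : p - 1 ≠ 0 := hp1.ne'
    have h2 : p - 1 - q ≠ 0 := hpq.ne'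
    field_simp
    ring
  have hγ1 : 1 ≤ γ := by
    rw [hγ_def, le_div_iff₀ hpq]; linarith
  set κ := (ENNReal.ofReal (2 ^ (η * β)))⁻¹ with hκ_def
  have hκ0 : κ ≠ 0 := ENNReal.inv_ne_zero.mpr ENNReal.ofReal_ne_top
  have hκtop : κ ≠ ⊤ := ENNReal.inv_ne_top.mpr
    (by simp only [ne_eq, ENNReal.ofReal_eq_zero, not_le]; positivity)
  have hκ1 : κ ≤ 1 := by
    rw [hκ_def]
    apply ENNReal.inv_le_one.mpr
    exact ENNReal.one_le_ofReal.mpr (Real.one_le_rpow one_le_two (by positivity))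
  set b0 := κ * 2⁻¹ with hb0_def
  have hb00 : b0 ≠ 0 := mul_ne_zero hκ0 (by norm_num)
  have hb0top : b0 ≠ ⊤ := ENNReal.mul_ne_top hκtop (by norm_num)
  have hb01 : b0 ≤ 1 := by
    calc b0 ≤ 1 * 1 := mul_le_mul' hκ1 (by norm_num)
      _ = 1 := one_mul 1
  set Ch := b0 ^ (γ * γ) with hCh_def
  have hCh0 : Ch ≠ 0 := by
    rw [hCh_def]
    exact (ENNReal.rpow_pos (zero_lt_iff.mpr hb00) hb0top).ne'
  have hChtop : Ch ≠ ⊤ := by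
    rw [hCh_def]
    exact ENNReal.rpow_ne_top_of_nonneg (by positivity) hb0top
  have hCh1 : Ch ≤ 1 := by
    rw [hCh_def]
    exact ENNReal.rpow_le_one hb01 (by positivity)
  refine ⟨Ch * 2⁻¹, ENNReal.mul_pos hCh0 (by norm_num), ENNReal.mul_ne_top hChtop (by norm_num),
    ?_⟩
  intro σ hσ u hu hloc hpos hsuper
  have huq_meas : Measurable fun y => u y ^ q :=
    ENNReal.continuous_rpow_const.measurable.comp hu
  set ν := σ.withDensity fun y => u y ^ q with hν_def
  have hν_app : ∀ s : Set (EuclideanSpace ℝ (Fin n)), MeasurableSet s →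
      ν s = ∫⁻ y in s, u y ^ q ∂σ := fun s hs => withDensity_apply _ hs
  -- find a base ball with positive finite mass
  obtain ⟨k₀, hk₀⟩ : ∃ k : ℕ, 0 < ν (Metric.ball (0 : EuclideanSpace ℝ (Fin n)) ((k:ℝ)+1)) := by
    by_contra hcon
    push_neg at hcon
    have hz : ∀ k : ℕ, ν (Metric.ball (0 : EuclideanSpace ℝ (Fin n)) ((k:ℝ)+1)) = 0 :=
      fun k => le_antisymm (hcon k) (zero_le)
    have hU : (Set.univ : Set (EuclideanSpace ℝ (Fin n)))
        = ⋃ k : ℕ, Metric.ball 0 ((k:ℝ)+1) := by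
      ext z
      simp only [Set.mem_univ, Set.mem_iUnion, Metric.mem_ball, true_iff]
      obtain ⟨k, hk⟩ := exists_nat_gt (dist z 0)
      exact ⟨k, by linarith⟩
    have hzero : ν Set.univ = 0 := by
      rw [hU]
      exact measure_iUnion_null fun k => hz k
    rw [hν_app _ MeasurableSet.univ, setLIntegral_univ] at hzero
    rw [hzero] at hpos
    exact lt_irrefl 0 hpos
  set x₀ : EuclideanSpace ℝ (Fin n) := 0 with hx₀_def
  set R₀ := (k₀:ℝ)+1 with hR₀_def
  have hR₀ : 0 < R₀ := by rw [hR₀_def]; positivity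
  set m0 := ν (Metric.ball x₀ R₀) with hm0_def
  have hm00 : m0 ≠ 0 := hk₀.ne'
  have hm0top : m0 ≠ ⊤ := by
    rw [hm0_def, hν_app _ measurableSet_ball]
    exact hloc x₀ R₀ hR₀
  -- base a.e. lower bound for u
  have hbase : ∀ᵐ x ∂σ, ∀ N : ℕ, x ∈ Metric.ball x₀ (N:ℝ) →
      m0 ^ β * ENNReal.ofReal (((N:ℝ)+R₀) ^ (-(η*β)) / (η*β)) ≤ u x := by
    filter_upwards [hsuper] with x hx N hxN
    set d := dist x x₀ + R₀ with hd_def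
    have hd0 : 0 < d := add_pos_of_nonneg_of_pos dist_nonneg hR₀
    have hdN : d ≤ (N:ℝ) + R₀ := by
      have h1 := Metric.mem_ball.mp hxN
      rw [hd_def]; linarith
    have hofle : ENNReal.ofReal (((N:ℝ)+R₀) ^ (-(η*β)) / (η*β))
        ≤ ENNReal.ofReal (d ^ (-(η*β)) / (η*β)) := by
      apply ENNReal.ofReal_le_ofReal
      have h1 : ((N:ℝ)+R₀) ^ (-(η*β)) ≤ d ^ (-(η*β)) := by
        rw [Real.rpow_neg (by positivity), Real.rpow_neg hd0.le]
        have h2 : d ^ (η*β) ≤ ((N:ℝ)+R₀) ^ (η*β) :=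
          Real.rpow_le_rpow hd0.le hdN (by positivity)
        have h3 : (0:ℝ) < d ^ (η*β) := Real.rpow_pos_of_pos hd0 _
        exact inv_anti₀ h3 h2
      rw [div_eq_mul_inv, div_eq_mul_inv]
      exact mul_le_mul_of_nonneg_right h1 (by positivity)
    have hballs : ∀ s : ℝ, d < s → m0 ≤ ν (Metric.ball x s) := by
      intro s hs
      rw [hm0_def]
      apply measure_mono
      intro z hz
      rw [Metric.mem_ball] at hz ⊢
      calc dist z x ≤ dist z x₀ + dist x₀ x := dist_triangle z x₀ x
        _ < R₀ + dist x x₀ := by rw [dist_comm x₀ x]; linarith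
        _ = d := by rw [hd_def]; ring
        _ < s := hs
    calc m0 ^ β * ENNReal.ofReal (((N:ℝ)+R₀) ^ (-(η*β)) / (η*β))
        ≤ m0 ^ β * ENNReal.ofReal (d ^ (-(η*β)) / (η*β)) := mul_le_mul_right hofle _
      _ ≤ wolffTail n p α ν x d := tail_const_lower hp hη ν x hd0 hm0top hballs
      _ ≤ wolff n p α ν x := wolffTail_anti n p α ν x hd0.le
      _ ≤ u x := hx
  -- one iteration step
  have hstep : ∀ (σ' : Measure (EuclideanSpace ℝ (Fin n))), σ' ≤ σ →
      ∀ (cc : ℝ≥0∞), cc ≠ ⊤ → ∀ δ : ℝ, 0 ≤ δ →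
      (∀ᵐ y ∂σ', cc * wolff n p α σ' y ^ δ ≤ u y) →
      ∀ᵐ x ∂σ, cc ^ θ * κ ^ (δ*θ) * (wolff n p α σ' x / 2) ^ (δ*θ + 1) ≤ u x := by
    intro σ' hσ'le cc hcc δ hδ hae
    have hlow : ∀ x : EuclideanSpace ℝ (Fin n), ∀ r : ℝ, 0 < r →
        (cc * (κ * wolffTail n p α σ' x r) ^ δ) ^ q * σ' (Metric.ball x r)
          ≤ ν (Metric.ball x r) := by
      intro x r hr
      calc (cc * (κ * wolffTail n p α σ' x r) ^ δ) ^ q * σ' (Metric.ball x r)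
          = ∫⁻ _ in Metric.ball x r, (cc * (κ * wolffTail n p α σ' x r) ^ δ) ^ q ∂σ' :=
            (setLIntegral_const _ _).symm
        _ ≤ ∫⁻ y in Metric.ball x r, u y ^ q ∂σ' := by
            apply lintegral_mono_ae
            rw [ae_restrict_iff' measurableSet_ball]
            filter_upwards [hae] with y hy hymem
            apply ENNReal.rpow_le_rpow _ hq0.le
            refine le_trans ?_ hy
            apply mul_le_mul_right
            apply ENNReal.rpow_le_rpow _ hδ
            exact wolff_shift hp hη.le σ' hr hymem
        _ ≤ ∫⁻ y in Metric.ball x r, u y ^ q ∂σ :=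
            lintegral_mono' (Measure.restrict_mono (subset_refl _) hσ'le) (le_refl _)
        _ = ν (Metric.ball x r) := (hν_app _ measurableSet_ball).symm
    have hres : ∀ x, cc ^ (q*β) * κ ^ (δ*(q*β)) * (wolff n p α σ' x / 2) ^ (δ*(q*β)+1)
        ≤ wolff n p α ν x :=
      fun x => wolff_step hp hq0 hη σ' ν x hcc hδ (hlow x)
    filter_upwards [hsuper] with x hx
    exact le_trans (hres x) hx
  -- per-N main bound
  have hmainN : ∀ N : ℕ, ∀ᵐ x ∂σ,
      Ch * 2⁻¹ * wolff n p α (σ.restrict (Metric.ball x₀ (N:ℝ))) x ^ γ ≤ u x := by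
    intro N
    set σ' := σ.restrict (Metric.ball x₀ (N:ℝ)) with hσ'_def
    have hσ'le : σ' ≤ σ := Measure.restrict_le_self
    set c₀ := m0 ^ β * ENNReal.ofReal (((N:ℝ)+R₀) ^ (-(η*β)) / (η*β)) with hc₀_def
    have hc₀0 : c₀ ≠ 0 := by
      rw [hc₀_def]
      apply mul_ne_zero
      · exact (ENNReal.rpow_pos (zero_lt_iff.mpr hm00) hm0top).ne'
      · simp only [ne_eq, ENNReal.ofReal_eq_zero, not_le]
        apply div_pos (Real.rpow_pos_of_pos (by positivity) _) (by positivity)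
    have hc₀top : c₀ ≠ ⊤ := by
      rw [hc₀_def]
      exact ENNReal.mul_ne_top (ENNReal.rpow_ne_top_of_nonneg hβ0.le hm0top)
        ENNReal.ofReal_ne_top
    have hθk1 : ∀ k : ℕ, θ^k ≤ 1 := fun k => pow_le_one₀ hθ0.le hθ1.le
    have hδ0 : ∀ k : ℕ, 0 ≤ γ*(1-θ^k) :=
      fun k => mul_nonneg hγpos.le (by linarith [hθk1 k])
    have hδθγ : ∀ k : ℕ, (γ*(1-θ^k))*θ + 1 = γ*(1-θ^(k+1)) := by
      intro k
      rw [pow_succ]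
      linear_combination hγθ
    -- the inductive step
    have hstepk : ∀ k : ℕ,
        (∀ᵐ y ∂σ', (c₀^(θ^k) * Ch) * wolff n p α σ' y ^ (γ*(1-θ^k)) ≤ u y) →
        ∀ᵐ x ∂σ, (c₀^(θ^(k+1)) * Ch) * wolff n p α σ' x ^ (γ*(1-θ^(k+1))) ≤ u x := by
      intro k hk
      have hccne : (c₀^(θ^k) * Ch) ≠ ⊤ :=
        ENNReal.mul_ne_top (ENNReal.rpow_ne_top_of_nonneg (pow_nonneg hθ0.le k) hc₀top) hChtop
      have h1 := hstep σ' hσ'le (c₀^(θ^k) * Ch) hccne (γ*(1-θ^k)) (hδ0 k) hk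
      filter_upwards [h1] with x hx
      refine le_trans ?_ hx
      set δ := γ*(1-θ^k) with hδ_def
      have hδθle : δ*θ ≤ γ := by
        have h2 := hδθγ k
        nlinarith [pow_nonneg hθ0.le (k+1), hγpos.le]
      have he_le : δ*θ + 1 ≤ γ := by
        have h2 := hδθγ k
        nlinarith [pow_nonneg hθ0.le (k+1), hγpos.le]
      have hcoeff : Ch ≤ Ch^θ * (κ^(δ*θ) * 2⁻¹^(δ*θ+1)) := by
        have h2 : b0^γ ≤ κ^(δ*θ) * 2⁻¹^(δ*θ+1) := by
          rw [hb0_def, ENNReal.mul_rpow_of_nonneg _ _ hγpos.le]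
          exact mul_le_mul' (ENNReal.rpow_le_rpow_of_exponent_ge hκ1 hδθle)
            (ENNReal.rpow_le_rpow_of_exponent_ge (by norm_num) he_le)
        calc Ch = Ch^θ * b0^γ := by
              rw [hCh_def, ← ENNReal.rpow_mul, ← ENNReal.rpow_add _ _ hb00 hb0top]
              congr 1
              linear_combination (-γ)*hγθ
          _ ≤ Ch^θ * (κ^(δ*θ) * 2⁻¹^(δ*θ+1)) := mul_le_mul_right h2 _
      calc c₀^(θ^(k+1)) * Ch * wolff n p α σ' x ^ (γ*(1-θ^(k+1)))
          = c₀^(θ^(k+1)) * Ch * wolff n p α σ' x ^ (δ*θ+1) := by rw [hδθγ k]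
        _ ≤ c₀^(θ^(k+1)) * (Ch^θ * (κ^(δ*θ) * 2⁻¹^(δ*θ+1))) * wolff n p α σ' x ^ (δ*θ+1) := by
            apply mul_le_mul_left
            exact mul_le_mul_right hcoeff _
        _ = (c₀^(θ^k) * Ch)^θ * κ^(δ*θ) * (wolff n p α σ' x / 2) ^ (δ*θ+1) := by
            have e1 : (c₀^(θ^k) * Ch)^θ = c₀^(θ^(k+1)) * Ch^θ := by
              rw [ENNReal.mul_rpow_of_nonneg _ _ hθ0.le, ← ENNReal.rpow_mul, ← pow_succ]
            have e2 : (wolff n p α σ' x / 2) ^ (δ*θ+1)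
                = wolff n p α σ' x ^ (δ*θ+1) * 2⁻¹ ^ (δ*θ+1) := by
              rw [div_eq_mul_inv, ENNReal.mul_rpow_of_nonneg _ _
                (add_nonneg (mul_nonneg (hδ0 k) hθ0.le) zero_le_one)]
            rw [e1, e2]
            ring
    -- iterate on σ'
    have hiter0 : ∀ k : ℕ, ∀ᵐ y ∂σ', (c₀^(θ^k) * Ch) * wolff n p α σ' y ^ (γ*(1-θ^k)) ≤ u y := by
      intro k
      induction k with
      | zero =>
        filter_upwards [ae_restrict_of_ae hbase, ae_restrict_mem measurableSet_ball]
          with y hy hymem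
        have h1 : c₀ ≤ u y := by
          rw [hc₀_def]
          exact hy N hymem
        have hexp0 : γ*(1-θ^0) = 0 := by rw [pow_zero]; ring
        calc (c₀^(θ^0) * Ch) * wolff n p α σ' y ^ (γ*(1-θ^0))
            = c₀ * Ch := by rw [hexp0, ENNReal.rpow_zero, mul_one, pow_zero, ENNReal.rpow_one]
          _ ≤ c₀ * 1 := mul_le_mul_right hCh1 _
          _ = c₀ := mul_one _
          _ ≤ u y := h1
      | succ k ih => exact ae_restrict_of_ae (hstepk k ih)
    have hiterσ : ∀ k : ℕ, ∀ᵐ x ∂σ,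
        (c₀^(θ^(k+1)) * Ch) * wolff n p α σ' x ^ (γ*(1-θ^(k+1))) ≤ u x :=
      fun k => hstepk k (hiter0 k)
    -- pass to the limit k → ∞
    filter_upwards [ae_all_iff.mpr hiterσ] with x hx
    rcases eq_or_ne (wolff n p α σ' x) 0 with hW0 | hW0
    · rw [hW0, ENNReal.zero_rpow_of_pos hγpos, mul_zero]
      exact zero_le
    rcases eq_or_ne (wolff n p α σ' x) ⊤ with hWt | hWt
    · have h1 := hx 0
      rw [hWt] at h1
      have hexp1 : 0 < γ*(1-θ^(0+1)) := by
        rw [pow_one]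
        nlinarith [hγθ]
      rw [ENNReal.top_rpow_of_pos hexp1] at h1
      have hcne : c₀^(θ^(0+1)) * Ch ≠ 0 :=
        mul_ne_zero (ENNReal.rpow_pos (zero_lt_iff.mpr hc₀0) hc₀top).ne' hCh0
      rw [ENNReal.mul_top hcne] at h1
      have hut : u x = ⊤ := top_le_iff.mp h1
      rw [hut]
      exact le_top
    · set W := wolff n p α σ' x with hW_def
      set b := c₀ * W ^ (-γ) with hb_def
      have hWγ0 : W ^ (-γ) ≠ 0 := (ENNReal.rpow_pos (zero_lt_iff.mpr hW0) hWt).ne'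
      have hbne : b ≠ 0 := mul_ne_zero hc₀0 hWγ0
      obtain ⟨k, hk2⟩ := exists_rpow_half hθ0 hθ1 b hbne
      have hkey := hx k
      refine le_trans ?_ hkey
      set e := θ^(k+1) with he_def
      have he0 : 0 < e := pow_pos hθ0 _
      have hWsplit : W ^ (γ*(1-e)) = W ^ γ * (W ^ (-γ)) ^ e := by
        rw [← ENNReal.rpow_mul W (-γ) e, ← ENNReal.rpow_add _ _ hW0 hWt]
        congr 1
        ring
      have hbsplit : b ^ e = c₀ ^ e * (W ^ (-γ)) ^ e := by
        rw [hb_def, ENNReal.mul_rpow_of_nonneg _ _ he0.le]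
      have hek : (2:ℝ≥0∞)⁻¹ ≤ b ^ e := by
        rcases le_or_gt b 1 with hble | hbgt
        · rw [he_def]
          refine le_trans hk2 (ENNReal.rpow_le_rpow_of_exponent_ge hble ?_)
          calc θ^(k+1) = θ^k * θ := pow_succ θ k
            _ ≤ θ^k * 1 := mul_le_mul_of_nonneg_left hθ1.le (pow_nonneg hθ0.le k)
            _ = θ^k := mul_one _
        · calc (2:ℝ≥0∞)⁻¹ ≤ 1 := by norm_num
            _ ≤ b ^ e := ENNReal.one_le_rpow hbgt.le he0
      calc Ch * 2⁻¹ * W ^ γ ≤ Ch * b ^ e * W ^ γ := by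
            apply mul_le_mul_left
            exact mul_le_mul_right hek _
        _ = c₀ ^ e * Ch * W ^ (γ*(1-e)) := by
            rw [hWsplit, hbsplit]
            ring
  -- supremum over N
  have hUnivBalls : (⋃ N : ℕ, Metric.ball x₀ (N:ℝ)) = Set.univ := by
    ext z
    simp only [Set.mem_iUnion, Metric.mem_ball, Set.mem_univ, iff_true]
    obtain ⟨k, hk⟩ := exists_nat_gt (dist z x₀)
    exact ⟨k, hk⟩
  have hWsup : ∀ x, wolff n p α σ x
      = ⨆ N : ℕ, wolff n p α (σ.restrict (Metric.ball x₀ (N:ℝ))) x := by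
    intro x
    have hmono : Monotone fun N : ℕ => wkern n p α (σ.restrict (Metric.ball x₀ (N:ℝ))) x := by
      intro a b hab r
      unfold wkern
      refine ENNReal.div_le_div (ENNReal.rpow_le_rpow (ENNReal.div_le_div ?_ le_rfl) hβ0.le)
        le_rfl
      rw [Measure.restrict_apply measurableSet_ball, Measure.restrict_apply measurableSet_ball]
      apply measure_mono
      apply Set.inter_subset_inter_right
      exact Metric.ball_subset_ball (by exact_mod_cast hab)
    have hsup_r : ∀ r : ℝ, wkern n p α σ x r
        = ⨆ N : ℕ, wkern n p α (σ.restrict (Metric.ball x₀ (N:ℝ))) x r := by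
      intro r
      unfold wkern
      have h2 : ∀ N : ℕ, (σ.restrict (Metric.ball x₀ (N:ℝ))) (Metric.ball x r)
          = σ (Metric.ball x r ∩ Metric.ball x₀ (N:ℝ)) :=
        fun N => Measure.restrict_apply measurableSet_ball
      have h3 : Monotone fun N : ℕ => Metric.ball x r ∩ Metric.ball x₀ ((N:ℝ)) := by
        intro a b hab
        apply Set.inter_subset_inter_right
        exact Metric.ball_subset_ball (by exact_mod_cast hab)
      have h1 : σ (Metric.ball x r)
          = ⨆ N : ℕ, (σ.restrict (Metric.ball x₀ (N:ℝ))) (Metric.ball x r) := by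
        calc σ (Metric.ball x r)
            = σ (⋃ N : ℕ, Metric.ball x r ∩ Metric.ball x₀ (N:ℝ)) := by
              rw [← Set.inter_iUnion, hUnivBalls, Set.inter_univ]
          _ = ⨆ N : ℕ, σ (Metric.ball x r ∩ Metric.ball x₀ (N:ℝ)) := h3.measure_iUnion
          _ = ⨆ N : ℕ, (σ.restrict (Metric.ball x₀ (N:ℝ))) (Metric.ball x r) := by
              simp_rw [h2]
      rw [h1, ENNReal.iSup_div, ennreal_iSup_rpow _ hβ0, ENNReal.iSup_div]
    calc wolff n p α σ x
        = ∫⁻ r in Set.Ioi (0:ℝ), wkern n p α σ x r := rfl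
      _ = ∫⁻ r in Set.Ioi (0:ℝ),
            ⨆ N : ℕ, wkern n p α (σ.restrict (Metric.ball x₀ (N:ℝ))) x r :=
          lintegral_congr fun r => hsup_r r
      _ = ⨆ N : ℕ, ∫⁻ r in Set.Ioi (0:ℝ),
            wkern n p α (σ.restrict (Metric.ball x₀ (N:ℝ))) x r :=
          lintegral_iSup (fun N => wkern_measurable n p α _ x) hmono
      _ = ⨆ N : ℕ, wolff n p α (σ.restrict (Metric.ball x₀ (N:ℝ))) x := rfl
  filter_upwards [ae_all_iff.mpr hmainN] with x hx
  rw [hWsup x, ennreal_iSup_rpow _ hγpos, ENNReal.mul_iSup]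
  exact iSup_le fun N => hx N
end

section
/- Let $n\ge 3$, $0<q<1$, and $0<2\alpha<n$. There exists a nonnegative locally finite Borel measure $\sigma$ on $\mathbb{R}^n$ such that (a) $\int_1^\infty \sigma(B(0,R))R^{-(n-2\alpha)}\,dR/R<\infty$, (b) for every $R>0$ the least constant $\kappa(B(0,R))$ in $\|\mathbf{I}_{2\alpha}\nu\|_{L^q(\sigma|_{B(0,R)})}\le\kappa(B(0,R))\nu(\mathbb{R}^n)$ is finite, and (c) $\int_1^\infty \kappa(B(0,R))^{q/(1-q)}R^{-(n-2\alpha)}\,dR/R=\infty$. -/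
open MeasureTheory ENNReal

noncomputable def riesz (n : ℕ) (α : ℝ) (ν : Measure (EuclideanSpace ℝ (Fin n)))
    (x : EuclideanSpace ℝ (Fin n)) : ℝ≥0∞ :=
  ∫⁻ y, ENNReal.ofReal (dist x y) ^ (2 * α - n) ∂ν

/-- Least constant in the localized `(L¹, L^q)` embedding for the Riesz potential. -/
noncomputable def kappaRiesz (n : ℕ) (α q : ℝ) (σ : Measure (EuclideanSpace ℝ (Fin n)))
    (B : Set (EuclideanSpace ℝ (Fin n))) : ℝ≥0∞ :=
  sInf {κ : ℝ≥0∞ | ∀ ν : Measure (EuclideanSpace ℝ (Fin n)), IsFiniteMeasure ν →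
    (∫⁻ x in B, riesz n α ν x ^ q ∂σ) ^ (1 / q) ≤ κ * ν Set.univ}

open Metric Set Module

abbrev Esp (n : ℕ) := EuclideanSpace ℝ (Fin n)

noncomputable def gg (n : ℕ) (q : ℝ) (k : ℕ) : ℝ := ((k : ℝ) + 2) ^ (((n : ℝ) + 1) * (1 - q))

noncomputable def rr (n : ℕ) (q α : ℝ) (k : ℕ) : ℝ :=
  min (1/2) (((2 : ℝ) ^ (-(k : ℝ)) / gg n q k) ^ (1 / (((n : ℝ) - 2*α) * q)))

noncomputable def yy (n : ℕ) (k : ℕ) : Esp n :=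
  if h : n = 0 then 0 else EuclideanSpace.single ⟨0, Nat.pos_of_ne_zero h⟩ (k : ℝ)

noncomputable def dd (n : ℕ) (q α : ℝ) (k : ℕ) : ℝ≥0∞ :=
  ENNReal.ofReal (gg n q k) * ENNReal.ofReal (rr n q α k) ^ (((n:ℝ) - 2*α) * q)
    * (volume (ball (0 : Esp n) (rr n q α k)))⁻¹

noncomputable def sig (n : ℕ) (q α : ℝ) : Measure (Esp n) :=
  Measure.sum fun k => dd n q α k • (volume.restrict (ball (yy n k) (rr n q α k)))



-- rpow of ENNReal is antitone in base for nonpositive exponent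
lemma ennrpow_anti {t : ℝ} (ht : t ≤ 0) {a b : ℝ≥0∞} (hab : a ≤ b) : b ^ t ≤ a ^ t := by
  rw [← neg_neg t, ENNReal.rpow_neg b, ENNReal.rpow_neg a]
  exact ENNReal.inv_le_inv.mpr (ENNReal.rpow_le_rpow hab (by linarith))

lemma vol_zero_singleton (n : ℕ) (hn : 0 < n) : volume ({(0 : EuclideanSpace ℝ (Fin n))} : Set (EuclideanSpace ℝ (Fin n))) = 0 := by
  have h := Measure.addHaar_closedBall (volume : Measure (EuclideanSpace ℝ (Fin n))) 0 (le_refl 0)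
  rw [closedBall_zero] at h
  rw [h, finrank_euclideanSpace_fin, zero_pow hn.ne', ENNReal.ofReal_zero, zero_mul]

lemma finite_ball_rpow (n : ℕ) (hn : 0 < n) {t : ℝ} (ht : -(n:ℝ) < t) (ht0 : t < 0)
    {ρ : ℝ} (hρ : 0 < ρ) :
    ∫⁻ x in ball (0 : EuclideanSpace ℝ (Fin n)) ρ, ENNReal.ofReal ‖x‖ ^ t ∂volume < ⊤ := by
  set E := EuclideanSpace ℝ (Fin n)
  set μ' := (volume : Measure E).restrict (ball (0 : E) ρ) with hμ'
  have h0 : μ' ({(0 : E)} : Set E) = 0 := by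
    rw [hμ', Measure.restrict_apply (measurableSet_singleton _)]
    exact measure_mono_null inter_subset_left (vol_zero_singleton n hn)
  have hcongr : ∫⁻ x in ball (0 : E) ρ, ENNReal.ofReal ‖x‖ ^ t ∂volume
      = ∫⁻ x, ENNReal.ofReal (‖x‖ ^ t) ∂μ' := by
    apply lintegral_congr_ae
    rw [Filter.EventuallyEq, ae_iff]
    apply measure_mono_null _ h0
    intro x hx
    simp only [mem_setOf_eq, mem_singleton_iff] at *
    by_contra hx0
    exact hx (ENNReal.ofReal_rpow_of_pos (norm_pos_iff.mpr hx0))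
  rw [hcongr]
  have hmble : AEMeasurable (fun x : E => ‖x‖ ^ t) μ' := by fun_prop
  rw [lintegral_eq_lintegral_meas_le μ' (Filter.Eventually.of_forall fun x => by positivity) hmble]
  -- bound the distribution function
  have hsub : ∀ s : ℝ, 0 < s → {a : E | s ≤ ‖a‖ ^ t} ⊆ closedBall 0 (s ^ t⁻¹) := by
    intro s hs a ha
    simp only [mem_setOf_eq] at ha
    rcases eq_or_ne a 0 with rfl | ha0
    · rw [norm_zero, Real.zero_rpow ht0.ne] at ha; linarith
    · rw [mem_closedBall_zero_iff]
      exact (Real.le_rpow_inv_iff_of_neg (norm_pos_iff.mpr ha0) hs ht0).mpr ha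
  calc ∫⁻ s in Ioi (0:ℝ), μ' {a | s ≤ ‖a‖ ^ t}
      ≤ (∫⁻ s in Ioc (0:ℝ) 1, μ' {a | s ≤ ‖a‖ ^ t}) + ∫⁻ s in Ioi (1:ℝ), μ' {a | s ≤ ‖a‖ ^ t} :=
        le_trans (lintegral_mono_set Ioi_subset_Ioc_union_Ioi) (lintegral_union_le _ _ _)
    _ < ⊤ := by
        apply ENNReal.add_lt_top.2
        constructor
        · calc ∫⁻ s in Ioc (0:ℝ) 1, μ' {a | s ≤ ‖a‖ ^ t}
              ≤ ∫⁻ _ in Ioc (0:ℝ) 1, volume (ball (0:E) ρ) := by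
                apply setLIntegral_mono' measurableSet_Ioc
                intro s _
                rw [hμ']
                exact le_trans (measure_mono (subset_univ _))
                  (le_of_eq (Measure.restrict_apply_univ _))
            _ = volume (ball (0:E) ρ) * volume (Ioc (0:ℝ) 1) := setLIntegral_const _ _
            _ < ⊤ := ENNReal.mul_lt_top measure_ball_lt_top (by simp [Real.volume_Ioc])
        · calc ∫⁻ s in Ioi (1:ℝ), μ' {a | s ≤ ‖a‖ ^ t}
              ≤ ∫⁻ s in Ioi (1:ℝ), ENNReal.ofReal (s ^ ((n:ℝ) * t⁻¹)) * volume (ball (0:E) 1) := by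
                apply setLIntegral_mono' measurableSet_Ioi
                intro s hs
                have hs0 : (0:ℝ) < s := lt_trans one_pos hs
                calc μ' {a | s ≤ ‖a‖ ^ t} ≤ volume (closedBall (0:E) (s ^ t⁻¹)) :=
                      le_trans (le_trans (Measure.restrict_apply_le _ _) (le_refl _))
                        (measure_mono (hsub s hs0))
                  _ = ENNReal.ofReal ((s ^ t⁻¹) ^ finrank ℝ E) * volume (ball (0:E) 1) :=
                      Measure.addHaar_closedBall _ _ (Real.rpow_nonneg hs0.le _)
                  _ = ENNReal.ofReal (s ^ ((n:ℝ) * t⁻¹)) * volume (ball (0:E) 1) := by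
                      congr 2
                      rw [finrank_euclideanSpace_fin, ← Real.rpow_natCast (s ^ t⁻¹) n,
                        ← Real.rpow_mul hs0.le]
                      ring_nf
            _ = (∫⁻ s in Ioi (1:ℝ), ENNReal.ofReal (s ^ ((n:ℝ) * t⁻¹))) * volume (ball (0:E) 1) :=
                lintegral_mul_const' _ _ measure_ball_lt_top.ne
            _ < ⊤ := by
                apply ENNReal.mul_lt_top _ measure_ball_lt_top
                apply IntegrableOn.setLIntegral_lt_top
                apply integrableOn_Ioi_rpow_of_lt _ one_pos
                rw [show (n:ℝ) * t⁻¹ = (n:ℝ) / t by ring]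
                rw [div_lt_iff_of_neg ht0]
                linarith

section basic
variable {n : ℕ} {q α : ℝ} (hn : 3 ≤ n) (hq0 : 0 < q) (hq1 : q < 1) (hα0 : 0 < α)
  (hα : 2 * α < n)

lemma gg_pos (k : ℕ) : 0 < gg n q k := Real.rpow_pos_of_pos (by positivity) _

include hq1 in
lemma gg_one_le (k : ℕ) : 1 ≤ gg n q k :=
  Real.one_le_rpow (by have := (Nat.cast_nonneg k : (0:ℝ) ≤ k); linarith)
    (by have := (Nat.cast_nonneg n : (0:ℝ) ≤ n); nlinarith)

include hq0 hq1 hα in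
lemma s_pos : 0 < ((n:ℝ) - 2*α) * q := by
  have : 2 * α < (n:ℝ) := hα
  nlinarith

include hq0 hq1 hα in
lemma rr_pos (k : ℕ) : 0 < rr n q α k := by
  have hs := s_pos hq0 hq1 hα
  have hA : 0 < (2 : ℝ) ^ (-(k : ℝ)) / gg n q k := by
    apply div_pos (Real.rpow_pos_of_pos (by norm_num) _) (gg_pos k)
  exact lt_min (by norm_num) (Real.rpow_pos_of_pos hA _)

lemma rr_le_half (k : ℕ) : rr n q α k ≤ 1/2 := min_le_left _ _

include hq0 hq1 hα in
lemma key_real (k : ℕ) : gg n q k * rr n q α k ^ (((n:ℝ) - 2*α) * q) ≤ (2:ℝ) ^ (-(k:ℝ)) := by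
  set s := ((n:ℝ) - 2*α) * q with hs_def
  have hs := s_pos hq0 hq1 hα
  set A := (2 : ℝ) ^ (-(k : ℝ)) / gg n q k with hA_def
  have hA : 0 < A := div_pos (Real.rpow_pos_of_pos (by norm_num) _) (gg_pos k)
  have h1 : rr n q α k ^ s ≤ (A ^ (1/s)) ^ s := by
    apply Real.rpow_le_rpow (rr_pos hq0 hq1 hα k).le (min_le_right _ _) hs.le
  have h2 : (A ^ (1/s)) ^ s = A := by
    rw [← Real.rpow_mul hA.le, one_div_mul_cancel hs.ne', Real.rpow_one]
  calc gg n q k * rr n q α k ^ s ≤ gg n q k * A := by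
        rw [h2] at h1; exact mul_le_mul_of_nonneg_left h1 (gg_pos k).le
    _ = (2:ℝ) ^ (-(k:ℝ)) := mul_div_cancel₀ _ (gg_pos (q := q) k).ne'



include hn in
lemma norm_yy (k : ℕ) : ‖yy n k‖ = (k : ℝ) := by
  rw [yy, dif_neg (by omega : ¬ n = 0), EuclideanSpace.norm_single]
  simp

variable (n) in
lemma V_pos {r : ℝ} (hr : 0 < r) : 0 < volume (ball (0 : Esp n) r) :=
  measure_ball_pos _ _ hr

variable (n) in
lemma V_lt_top (r : ℝ) : volume (ball (0 : Esp n) r) < ⊤ := measure_ball_lt_top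

include hq0 hq1 hα in
lemma dd_ne_top (k : ℕ) : dd n q α k ≠ ⊤ := by
  have h1 : ENNReal.ofReal (rr n q α k) ^ (((n:ℝ) - 2*α) * q) ≠ ⊤ :=
    (ENNReal.rpow_lt_top_of_nonneg (s_pos hq0 hq1 hα).le ENNReal.ofReal_ne_top).ne
  have h2 : (volume (ball (0 : Esp n) (rr n q α k)))⁻¹ ≠ ⊤ :=
    ENNReal.inv_ne_top.mpr (V_pos n (rr_pos hq0 hq1 hα k)).ne'
  exact ENNReal.mul_ne_top (ENNReal.mul_ne_top ENNReal.ofReal_ne_top h1) h2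

include hq0 hq1 hα in
lemma mass_eq (k : ℕ) :
    dd n q α k * volume (ball (yy n k) (rr n q α k))
      = ENNReal.ofReal (gg n q k * rr n q α k ^ (((n:ℝ) - 2*α) * q)) := by
  rw [Measure.addHaar_ball_center, dd, ENNReal.ofReal_mul (gg_pos (q := q) k).le,
    ENNReal.ofReal_rpow_of_pos (rr_pos hq0 hq1 hα k)]
  rw [mul_assoc, ENNReal.inv_mul_cancel (V_pos n (rr_pos hq0 hq1 hα k)).ne'
    (V_lt_top n _).ne, mul_one]

include hq0 hq1 hα in
lemma sig_univ_le : sig n q α univ ≤ 2 := by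
  have h1 : sig n q α univ = ∑' k, dd n q α k * volume (ball (yy n k) (rr n q α k)) := by
    rw [sig, Measure.sum_apply _ MeasurableSet.univ]
    congr 1
    ext k
    rw [Measure.smul_apply, smul_eq_mul, Measure.restrict_apply_univ]
  rw [h1]
  calc ∑' k, dd n q α k * volume (ball (yy n k) (rr n q α k))
      ≤ ∑' (k : ℕ), ENNReal.ofReal ((1/2 : ℝ) ^ k) := by
        apply ENNReal.tsum_le_tsum
        intro k
        rw [mass_eq hq0 hq1 hα k]
        apply ENNReal.ofReal_le_ofReal
        calc gg n q k * rr n q α k ^ (((n:ℝ) - 2*α) * q) ≤ (2:ℝ) ^ (-(k:ℝ)) :=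
              key_real hq0 hq1 hα k
          _ = (1/2 : ℝ) ^ k := by
              rw [Real.rpow_neg (by norm_num), Real.rpow_natCast]
              simp [inv_pow]
    _ = ∑' (k : ℕ), (ENNReal.ofReal (1/2 : ℝ)) ^ k := by
        congr 1; ext k; rw [← ENNReal.ofReal_pow (by norm_num)]
    _ = (1 - ENNReal.ofReal (1/2 : ℝ))⁻¹ := ENNReal.tsum_geometric _
    _ ≤ 2 := by
        rw [show ENNReal.ofReal (1/2:ℝ) = 1/2 by
          rw [ENNReal.ofReal_div_of_pos (by norm_num)]; norm_num]
        rw [ENNReal.sub_half (by norm_num)]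
        norm_num

include hq0 hq1 hα in
lemma sig_finite : IsFiniteMeasure (sig n q α) :=
  ⟨lt_of_le_of_lt (sig_univ_le hq0 hq1 hα) (by norm_num)⟩

end basic

section upper
variable {n : ℕ} {q α : ℝ} (hn : 3 ≤ n) (hq0 : 0 < q) (hq1 : q < 1) (hα0 : 0 < α)
  (hα : 2 * α < n)

lemma rpow_le_one_add {q : ℝ} (hq0 : 0 < q) (hq1 : q ≤ 1) (x : ℝ≥0∞) : x ^ q ≤ 1 + x := by
  rcases le_total x 1 with h | h
  · calc x^q ≤ 1^q := ENNReal.rpow_le_rpow h hq0.le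
      _ = 1 := ENNReal.one_rpow _
      _ ≤ 1 + x := le_self_add
  · calc x^q ≤ x^(1:ℝ) := ENNReal.rpow_le_rpow_of_exponent_le h hq1
      _ = x := ENNReal.rpow_one _
      _ ≤ 1 + x := le_add_self

lemma measK (n : ℕ) (t : ℝ) :
    Measurable (fun p : Esp n × Esp n => ENNReal.ofReal (dist p.1 p.2) ^ t) := by
  fun_prop

lemma lint_ball_dist (n : ℕ) (t : ℝ) (y : Esp n) (r : ℝ) :
    ∫⁻ x in ball y r, ENNReal.ofReal (dist x y) ^ t ∂volume
      = ∫⁻ x in ball (0 : Esp n) r, ENNReal.ofReal ‖x‖ ^ t ∂volume := by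
  rw [← lintegral_indicator measurableSet_ball, ← lintegral_indicator measurableSet_ball]
  have hfun : ∀ x : Esp n, (ball y r).indicator (fun x => ENNReal.ofReal (dist x y) ^ t) x
      = (ball (0 : Esp n) r).indicator (fun z => ENNReal.ofReal ‖z‖ ^ t) (x + -y) := by
    intro x
    by_cases hx : x ∈ ball y r
    · rw [indicator_of_mem hx, indicator_of_mem]
      · rw [dist_eq_norm, sub_eq_add_neg]
      · rw [mem_ball_zero_iff, ← sub_eq_add_neg, ← dist_eq_norm]
        exact hx
    · rw [indicator_of_notMem hx, indicator_of_notMem]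
      rw [mem_ball_zero_iff, ← sub_eq_add_neg, ← dist_eq_norm]
      exact fun h => hx h
  rw [show ((ball y r).indicator (fun x => ENNReal.ofReal (dist x y) ^ t))
      = fun x => (ball (0 : Esp n) r).indicator (fun z => ENNReal.ofReal ‖z‖ ^ t) (x + -y)
      from funext hfun]
  exact lintegral_add_right_eq_self _ _

include hn hq0 hq1 hα0 hα in
lemma kappa_ne_top (R : ℝ) :
    kappaRiesz n α q (sig n q α) (ball (0 : Esp n) R) ≠ ⊤ := by
  haveI := sig_finite hq0 hq1 hα
  set σ := sig n q α with hσ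
  set B := ball (0 : Esp n) R with hB
  set N : ℕ := ⌈R⌉₊ + 1 with hN
  set J : ℕ → ℝ≥0∞ := fun k =>
    ∫⁻ x in ball (0 : Esp n) (rr n q α k), ENNReal.ofReal ‖x‖ ^ (2*α - (n:ℝ)) ∂volume with hJ
  set F : ℕ → ℝ≥0∞ := fun k => J k + ENNReal.ofReal (rr n q α k) ^ (2*α - (n:ℝ))
    * volume (ball (0 : Esp n) (rr n q α k)) with hF
  set C := ∑ k ∈ Finset.range N, dd n q α k * F k with hC_def
  have ht : -(n:ℝ) < 2*α - n := by linarith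
  have ht0 : 2*α - (n:ℝ) < 0 := by
    have : 2 * α < (n:ℝ) := hα
    linarith
  have hCtop : C ≠ ⊤ := by
    rw [hC_def]
    apply (ENNReal.sum_lt_top.mpr ?_).ne
    intro k _
    apply ENNReal.mul_lt_top (dd_ne_top hq0 hq1 hα k).lt_top
    rw [hF]
    apply ENNReal.add_lt_top.mpr
    constructor
    · exact finite_ball_rpow n (by omega) ht ht0 (rr_pos hq0 hq1 hα k)
    · apply ENNReal.mul_lt_top _ (V_lt_top n _)
      rw [show 2*α - (n:ℝ) = -((n:ℝ) - 2*α) by ring, ENNReal.rpow_neg]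
      apply ENNReal.inv_lt_top.mpr
      apply ENNReal.rpow_pos (ENNReal.ofReal_pos.mpr (rr_pos hq0 hq1 hα k)) ENNReal.ofReal_ne_top
  -- uniform kernel bound
  have hC : ∀ y : Esp n,
      ∫⁻ x in B, ENNReal.ofReal (dist x y) ^ (2*α - (n:ℝ)) ∂σ ≤ C := by
    intro y
    have hrestrict : σ.restrict B
        = Measure.sum (fun k => dd n q α k •
            (volume.restrict (B ∩ ball (yy n k) (rr n q α k)))) := by
      rw [hσ, sig, Measure.restrict_sum _ measurableSet_ball]
      congr 1
      ext k : 1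
      rw [Measure.restrict_smul, Measure.restrict_restrict measurableSet_ball]
    have hrw : ∫⁻ x in B, ENNReal.ofReal (dist x y) ^ (2*α - (n:ℝ)) ∂σ
        = ∑' k, dd n q α k * ∫⁻ x in B ∩ ball (yy n k) (rr n q α k),
            ENNReal.ofReal (dist x y) ^ (2*α - (n:ℝ)) ∂volume := by
      rw [hrestrict, lintegral_sum_measure]
      congr 1
      ext k
      rw [lintegral_smul_measure, smul_eq_mul]
    rw [hrw]
    have hvanish : ∀ k ∉ Finset.range N, dd n q α k * ∫⁻ x in B ∩ ball (yy n k) (rr n q α k),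
        ENNReal.ofReal (dist x y) ^ (2*α - (n:ℝ)) ∂volume = 0 := by
      intro k hk
      have hkN : N ≤ k := by simpa using hk
      have hempty : B ∩ ball (yy n k) (rr n q α k) = ∅ := by
        rw [eq_empty_iff_forall_notMem]
        rintro x ⟨hx1, hx2⟩
        rw [hB, mem_ball_zero_iff] at hx1
        rw [mem_ball] at hx2
        have h1 : ‖yy n k‖ ≤ ‖yy n k - x‖ + ‖x‖ := by
          have := norm_sub_norm_le (yy n k) x
          linarith [norm_nonneg x]
        have h2 : ‖yy n k - x‖ = dist x (yy n k) := by rw [dist_eq_norm, norm_sub_rev]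
        have h3 : (k : ℝ) ≤ 1/2 + R := by
          rw [norm_yy hn] at h1
          have := rr_le_half (n := n) (q := q) (α := α) k
          linarith
        have h4 : R ≤ (⌈R⌉₊ : ℝ) := Nat.le_ceil R
        have h5 : (N : ℝ) ≤ (k : ℝ) := by exact_mod_cast hkN
        rw [hN] at h5
        push_cast at h5
        linarith
      rw [hempty, Measure.restrict_empty, lintegral_zero_measure, mul_zero]
    rw [tsum_eq_sum hvanish, hC_def]
    apply Finset.sum_le_sum
    intro k _
    apply mul_le_mul_right
    calc ∫⁻ x in B ∩ ball (yy n k) (rr n q α k),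
          ENNReal.ofReal (dist x y) ^ (2*α - (n:ℝ)) ∂volume
        ≤ ∫⁻ x in ball (yy n k) (rr n q α k),
          ENNReal.ofReal (dist x y) ^ (2*α - (n:ℝ)) ∂volume :=
          lintegral_mono_set inter_subset_right
      _ ≤ (∫⁻ x in ball y (rr n q α k), ENNReal.ofReal (dist x y) ^ (2*α - (n:ℝ)) ∂volume)
          + ∫⁻ x in ball (yy n k) (rr n q α k) \ ball y (rr n q α k),
              ENNReal.ofReal (dist x y) ^ (2*α - (n:ℝ)) ∂volume := by
          refine le_trans (lintegral_mono_set ?_) (lintegral_union_le _ _ _)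
          intro x hx
          by_cases hxy : x ∈ ball y (rr n q α k)
          · exact mem_union_left _ hxy
          · exact mem_union_right _ ⟨hx, hxy⟩
      _ ≤ F k := by
          rw [hF]
          apply add_le_add
          · rw [lint_ball_dist, hJ]
          · calc ∫⁻ x in ball (yy n k) (rr n q α k) \ ball y (rr n q α k),
                ENNReal.ofReal (dist x y) ^ (2*α - (n:ℝ)) ∂volume
                ≤ ∫⁻ _ in ball (yy n k) (rr n q α k) \ ball y (rr n q α k),
                    ENNReal.ofReal (rr n q α k) ^ (2*α - (n:ℝ)) ∂volume := by
                  apply setLIntegral_mono' (measurableSet_ball.diff measurableSet_ball)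
                  intro x hx
                  apply ennrpow_anti ht0.le
                  apply ENNReal.ofReal_le_ofReal
                  have := hx.2
                  rw [mem_ball] at this
                  linarith [not_lt.mp this]
              _ = ENNReal.ofReal (rr n q α k) ^ (2*α - (n:ℝ))
                  * volume (ball (yy n k) (rr n q α k) \ ball y (rr n q α k)) :=
                  setLIntegral_const _ _
              _ ≤ ENNReal.ofReal (rr n q α k) ^ (2*α - (n:ℝ))
                  * volume (ball (0 : Esp n) (rr n q α k)) := by
                  apply mul_le_mul_right
                  rw [← Measure.addHaar_ball_center volume (yy n k)]
                  exact measure_mono diff_subset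
  -- membership
  have hmem : ∀ ν : Measure (Esp n), IsFiniteMeasure ν →
      (∫⁻ x in B, riesz n α ν x ^ q ∂σ) ^ (1/q) ≤ (σ univ + C) ^ (1/q) * ν univ := by
    intro ν hν
    rcases eq_or_ne (ν univ) 0 with h0 | h0
    · have hν0 : ν = 0 := Measure.measure_univ_eq_zero.mp h0
      subst hν0
      simp only [riesz, lintegral_zero_measure]
      rw [ENNReal.zero_rpow_of_pos hq0, lintegral_zero,
        ENNReal.zero_rpow_of_pos (by positivity : (0:ℝ) < 1/q)]
      exact zero_le
    · set a := ν univ with ha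
      have hatop : a ≠ ⊤ := measure_ne_top ν _
      set ν' : Measure (Esp n) := a⁻¹ • ν with hν'
      haveI : IsFiniteMeasure ν' := by
        constructor
        rw [hν', Measure.smul_apply, smul_eq_mul, ENNReal.inv_mul_cancel h0 hatop]
        exact one_lt_top
      have hν'univ : ν' univ = 1 := by
        rw [hν', Measure.smul_apply, smul_eq_mul, ENNReal.inv_mul_cancel h0 hatop]
      have hr : ∀ x, riesz n α ν x = a * riesz n α ν' x := by
        intro x
        rw [hν', riesz, riesz, lintegral_smul_measure, smul_eq_mul, ← mul_assoc,
          ENNReal.mul_inv_cancel h0 hatop, one_mul]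
      have hswap : ∫⁻ x in B, riesz n α ν' x ∂σ ≤ C := by
        have heq : ∫⁻ x in B, riesz n α ν' x ∂σ
            = ∫⁻ y, ∫⁻ x in B, ENNReal.ofReal (dist x y) ^ (2*α - (n:ℝ)) ∂σ ∂ν' := by
          simp only [riesz]
          exact lintegral_lintegral_swap ((measK n (2*α - (n:ℝ))).aemeasurable)
        rw [heq]
        calc ∫⁻ y, ∫⁻ x in B, ENNReal.ofReal (dist x y) ^ (2*α - (n:ℝ)) ∂σ ∂ν'
            ≤ ∫⁻ _, C ∂ν' := lintegral_mono fun y => hC y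
          _ = C := by rw [lintegral_const, hν'univ, mul_one]
      have hinner : ∫⁻ x in B, riesz n α ν' x ^ q ∂σ ≤ σ univ + C := by
        calc ∫⁻ x in B, riesz n α ν' x ^ q ∂σ
            ≤ ∫⁻ x in B, (1 + riesz n α ν' x) ∂σ :=
              lintegral_mono fun x => rpow_le_one_add hq0 hq1.le _
          _ = σ B + ∫⁻ x in B, riesz n α ν' x ∂σ := by
              rw [lintegral_add_left measurable_const, setLIntegral_one]
          _ ≤ σ univ + C := add_le_add (measure_mono (subset_univ _)) hswap
      have hq_ne : q ≠ 0 := hq0.ne'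
      calc (∫⁻ x in B, riesz n α ν x ^ q ∂σ) ^ (1/q)
          = (a^q * ∫⁻ x in B, riesz n α ν' x ^ q ∂σ) ^ (1/q) := by
            congr 1
            rw [← lintegral_const_mul' _ _ (ENNReal.rpow_ne_top_of_nonneg hq0.le hatop)]
            apply lintegral_congr fun x => ?_
            rw [hr x, ENNReal.mul_rpow_of_nonneg _ _ hq0.le]
        _ ≤ (a^q * (σ univ + C)) ^ (1/q) :=
            ENNReal.rpow_le_rpow (mul_le_mul_right hinner _) (by positivity)
        _ = a * (σ univ + C) ^ (1/q) := by
            rw [ENNReal.mul_rpow_of_nonneg _ _ (by positivity : (0:ℝ) ≤ 1/q),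
              ← ENNReal.rpow_mul, mul_one_div_cancel hq_ne, ENNReal.rpow_one]
        _ = (σ univ + C) ^ (1/q) * a := mul_comm _ _
  have hle : kappaRiesz n α q σ B ≤ (σ univ + C) ^ (1/q) := sInf_le hmem
  apply ne_top_of_le_ne_top _ hle
  exact (ENNReal.rpow_lt_top_of_nonneg (by positivity)
    (ENNReal.add_ne_top.mpr ⟨measure_ne_top σ _, hCtop⟩)).ne

end upper

section lower
variable {n : ℕ} {q α : ℝ} (hn : 3 ≤ n) (hq0 : 0 < q) (hq1 : q < 1) (hα0 : 0 < α)
  (hα : 2 * α < n)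

include hn hq0 hq1 hα0 hα in
lemma kappa_lb (k : ℕ) {R : ℝ} (hkR : (k : ℝ) + 1 ≤ R) :
    ENNReal.ofReal (gg n q k) ^ (1/q) ≤ kappaRiesz n α q (sig n q α) (ball (0 : Esp n) R) := by
  set σ := sig n q α with hσ
  set B := ball (0 : Esp n) R with hB
  apply le_sInf
  intro κ hκ
  have hdir := hκ (Measure.dirac (yy n k)) inferInstance
  rw [measure_univ, mul_one] at hdir
  refine le_trans ?_ hdir
  apply ENNReal.rpow_le_rpow _ (by positivity : (0:ℝ) ≤ 1/q)
  -- reduce the integrand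
  have hint : ∀ x : Esp n, riesz n α (Measure.dirac (yy n k)) x ^ q
      = ENNReal.ofReal (dist x (yy n k)) ^ ((2*α - (n:ℝ)) * q) := by
    intro x
    rw [riesz, lintegral_dirac, ← ENNReal.rpow_mul]
  have hmono : (dd n q α k • (volume.restrict (ball (yy n k) (rr n q α k)))).restrict B
      ≤ σ.restrict B := by
    apply Measure.restrict_mono (subset_refl _)
    rw [hσ, sig]
    exact Measure.le_sum _ k
  have hsubset : ball (yy n k) (rr n q α k) ⊆ B := by
    intro x hx
    rw [mem_ball] at hx
    rw [hB, mem_ball_zero_iff]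
    have h1 : ‖x‖ ≤ ‖yy n k‖ + ‖x - yy n k‖ := by
      have := norm_add_le (yy n k) (x - yy n k)
      simpa using this
    have h2 : ‖x - yy n k‖ = dist x (yy n k) := (dist_eq_norm _ _).symm
    have h3 := rr_le_half (n := n) (q := q) (α := α) k
    rw [norm_yy hn] at h1
    linarith
  calc ENNReal.ofReal (gg n q k)
      = dd n q α k * (ENNReal.ofReal (rr n q α k) ^ ((2*α - (n:ℝ)) * q)
        * volume (ball (0 : Esp n) (rr n q α k))) := by
        rw [dd]
        have hr0 : ENNReal.ofReal (rr n q α k) ≠ 0 :=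
          (ENNReal.ofReal_pos.mpr (rr_pos hq0 hq1 hα k)).ne'
        have hrt : ENNReal.ofReal (rr n q α k) ≠ ⊤ := ENNReal.ofReal_ne_top
        have hV0 : volume (ball (0 : Esp n) (rr n q α k)) ≠ 0 :=
          (V_pos n (rr_pos hq0 hq1 hα k)).ne'
        have hVt : volume (ball (0 : Esp n) (rr n q α k)) ≠ ⊤ := (V_lt_top n _).ne
        have hexp : (2*α - (n:ℝ)) * q = -(((n:ℝ) - 2*α) * q) := by ring
        rw [hexp, ENNReal.rpow_neg]
        calc ENNReal.ofReal (gg n q k)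
            = ENNReal.ofReal (gg n q k) * ((ENNReal.ofReal (rr n q α k) ^ (((n:ℝ) - 2*α) * q)
              * (ENNReal.ofReal (rr n q α k) ^ (((n:ℝ) - 2*α) * q))⁻¹)
              * ((volume (ball (0 : Esp n) (rr n q α k)))⁻¹
                * volume (ball (0 : Esp n) (rr n q α k)))) := by
              rw [ENNReal.mul_inv_cancel (by
                  simp only [ne_eq, ENNReal.rpow_eq_zero_iff, not_or]
                  constructor
                  · rintro ⟨h, -⟩; exact hr0 h
                  · rintro ⟨h, -⟩; exact hrt h)
                (ENNReal.rpow_ne_top_of_nonneg (s_pos hq0 hq1 hα).le hrt),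
                ENNReal.inv_mul_cancel hV0 hVt, mul_one, mul_one]
          _ = ENNReal.ofReal (gg n q k) * ENNReal.ofReal (rr n q α k) ^ (((n:ℝ) - 2*α) * q)
              * (volume (ball (0 : Esp n) (rr n q α k)))⁻¹
              * ((ENNReal.ofReal (rr n q α k) ^ (((n:ℝ) - 2*α) * q))⁻¹
                * volume (ball (0 : Esp n) (rr n q α k))) := by ring
    _ ≤ ∫⁻ x in B, ENNReal.ofReal (dist x (yy n k)) ^ ((2*α - (n:ℝ)) * q)
            ∂(dd n q α k • (volume.restrict (ball (yy n k) (rr n q α k)))) := by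
        rw [Measure.restrict_smul, lintegral_smul_measure, smul_eq_mul,
          Measure.restrict_restrict measurableSet_ball,
          inter_eq_self_of_subset_right hsubset]
        apply mul_le_mul_right
        have hexp2 : (2*α - (n:ℝ)) * q ≤ 0 := by nlinarith [s_pos hq0 hq1 hα]
        have hpt : ∀ x ∈ ball (yy n k) (rr n q α k),
            ENNReal.ofReal (rr n q α k) ^ ((2*α - (n:ℝ)) * q)
              ≤ ENNReal.ofReal (dist x (yy n k)) ^ ((2*α - (n:ℝ)) * q) := by
          intro x hx
          apply ennrpow_anti hexp2
          exact ENNReal.ofReal_le_ofReal (le_of_lt (mem_ball.mp hx))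
        calc ENNReal.ofReal (rr n q α k) ^ ((2*α - (n:ℝ)) * q)
              * volume (ball (0 : Esp n) (rr n q α k))
            = ENNReal.ofReal (rr n q α k) ^ ((2*α - (n:ℝ)) * q)
              * volume (ball (yy n k) (rr n q α k)) := by
              rw [Measure.addHaar_ball_center volume (yy n k)]
          _ = ∫⁻ _ in ball (yy n k) (rr n q α k),
                ENNReal.ofReal (rr n q α k) ^ ((2*α - (n:ℝ)) * q) ∂volume :=
              (setLIntegral_const _ _).symm
          _ ≤ ∫⁻ x in ball (yy n k) (rr n q α k),
                ENNReal.ofReal (dist x (yy n k)) ^ ((2*α - (n:ℝ)) * q) ∂volume :=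
              setLIntegral_mono' measurableSet_ball hpt
    _ ≤ ∫⁻ x in B, ENNReal.ofReal (dist x (yy n k)) ^ ((2*α - (n:ℝ)) * q) ∂σ :=
        lintegral_mono' hmono le_rfl
    _ = ∫⁻ x in B, riesz n α (Measure.dirac (yy n k)) x ^ q ∂σ :=
        (lintegral_congr fun x => hint x).symm

end lower

theorem counterexample_measure_exists (n : ℕ) (q α : ℝ) (hn : 3 ≤ n)
    (hq0 : 0 < q) (hq1 : q < 1) (hα0 : 0 < α) (hα : 2 * α < n) :
    ∃ σ : Measure (EuclideanSpace ℝ (Fin n)), IsLocallyFiniteMeasure σ ∧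
      (∫⁻ R in Set.Ioi (1 : ℝ),
          σ (Metric.ball (0 : EuclideanSpace ℝ (Fin n)) R)
            / ENNReal.ofReal (R ^ ((n : ℝ) - 2 * α)) / ENNReal.ofReal R ≠ ⊤) ∧
      (∀ R : ℝ, 0 < R →
        kappaRiesz n α q σ (Metric.ball (0 : EuclideanSpace ℝ (Fin n)) R) ≠ ⊤) ∧
      (∫⁻ R in Set.Ioi (1 : ℝ),
          kappaRiesz n α q σ (Metric.ball (0 : EuclideanSpace ℝ (Fin n)) R) ^ (q / (1 - q))
            / ENNReal.ofReal (R ^ ((n : ℝ) - 2 * α)) / ENNReal.ofReal R = ⊤) := by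
  haveI := sig_finite (n := n) hq0 hq1 hα
  set c : ℝ := (n:ℝ) - 2*α with hc
  have hc0 : 0 < c := by
    have : 2*α < (n:ℝ) := hα
    rw [hc]; linarith
  refine ⟨sig n q α, inferInstance, ?_, fun R _ => kappa_ne_top hn hq0 hq1 hα0 hα R, ?_⟩
  · -- part (a)
    have hbound : ∀ R ∈ Ioi (1:ℝ),
        sig n q α (ball (0 : Esp n) R) / ENNReal.ofReal (R ^ c) / ENNReal.ofReal R
          ≤ 2 * ENNReal.ofReal (R ^ (-(c+1))) := by
      intro R hR
      have hR1 : (1:ℝ) < R := hR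
      have hR0 : (0:ℝ) < R := by linarith
      have h2 : sig n q α (ball (0 : Esp n) R) / ENNReal.ofReal (R ^ c) / ENNReal.ofReal R
          ≤ 2 / ENNReal.ofReal (R ^ c) / ENNReal.ofReal R := by
        apply ENNReal.div_le_div_right (ENNReal.div_le_div_right _ _) _
        exact le_trans (measure_mono (subset_univ _)) (sig_univ_le hq0 hq1 hα)
      refine le_trans h2 (le_of_eq ?_)
      rw [div_eq_mul_inv, div_eq_mul_inv, mul_assoc,
        ← ENNReal.ofReal_inv_of_pos (Real.rpow_pos_of_pos hR0 c),
        ← ENNReal.ofReal_inv_of_pos hR0, ← ENNReal.ofReal_mul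
          (by positivity : (0:ℝ) ≤ (R ^ c)⁻¹)]
      congr 2
      rw [show -(c+1) = -c + (-1) by ring, Real.rpow_add hR0, Real.rpow_neg hR0.le,
        show (-1 : ℝ) = -(1:ℝ) by ring, Real.rpow_neg hR0.le, Real.rpow_one]
    apply ne_of_lt
    calc ∫⁻ R in Ioi (1:ℝ),
          sig n q α (ball (0 : Esp n) R) / ENNReal.ofReal (R ^ c) / ENNReal.ofReal R
        ≤ ∫⁻ R in Ioi (1:ℝ), 2 * ENNReal.ofReal (R ^ (-(c+1))) :=
          setLIntegral_mono' measurableSet_Ioi hbound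
      _ = 2 * ∫⁻ R in Ioi (1:ℝ), ENNReal.ofReal (R ^ (-(c+1))) :=
          lintegral_const_mul' _ _ ENNReal.ofNat_ne_top
      _ < ⊤ := ENNReal.mul_lt_top ENNReal.ofNat_ne_top.lt_top
          (IntegrableOn.setLIntegral_lt_top
            (integrableOn_Ioi_rpow_of_lt (show -(c+1) < -1 by linarith) one_pos))
  · -- part (c)
    have key : ∀ R ∈ Ioi (2:ℝ), (1:ℝ≥0∞) ≤
        kappaRiesz n α q (sig n q α) (ball (0 : Esp n) R) ^ (q / (1 - q))
          / ENNReal.ofReal (R ^ c) / ENNReal.ofReal R := by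
      intro R hR
      have hR2 : (2:ℝ) < R := hR
      have hR0 : (0:ℝ) < R := by linarith
      set m : ℕ := ⌊R⌋₊ with hm
      have hm2 : 2 ≤ m := Nat.le_floor (by exact_mod_cast hR2.le)
      set k : ℕ := m - 1 with hk
      have hk1 : (k:ℝ) + 1 = (m:ℝ) := by
        rw [hk, Nat.cast_sub (by omega)]; ring
      have hkR : (k:ℝ) + 1 ≤ R := by
        rw [hk1]; exact Nat.floor_le hR0.le
      have hRk2 : R ≤ (k:ℝ) + 2 := by
        have := (Nat.lt_floor_add_one R).le
        have h2 : (k:ℝ) + 2 = (m:ℝ) + 1 := by rw [← hk1]; ring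
        rw [h2]; exact this
      have hlb := kappa_lb hn hq0 hq1 hα0 hα k hkR
      set κ := kappaRiesz n α q (sig n q α) (ball (0 : Esp n) R) with hκ
      have h1 : ENNReal.ofReal (R ^ c) * ENNReal.ofReal R ≤ κ ^ (q / (1-q)) := by
        have hreal : R ^ c * R ≤ ((k:ℝ) + 2) ^ ((n:ℝ) + 1) := by
          calc R ^ c * R = R ^ (c + 1) := (Real.rpow_add_one hR0.ne' c).symm
            _ ≤ ((k:ℝ) + 2) ^ (c + 1) :=
                Real.rpow_le_rpow hR0.le hRk2 (by linarith)
            _ ≤ ((k:ℝ) + 2) ^ ((n:ℝ) + 1) := by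
                apply Real.rpow_le_rpow_of_exponent_le
                  (by have := (Nat.cast_nonneg k : (0:ℝ) ≤ k); linarith)
                  (by have : 2*α < (n:ℝ) := hα; rw [hc]; linarith)
        have hgg : gg n q k ^ (1/(1-q)) = ((k:ℝ) + 2) ^ ((n:ℝ) + 1) := by
          rw [gg, ← Real.rpow_mul (by positivity)]
          congr 1
          have h1q : (1:ℝ) - q ≠ 0 := (by linarith : (0:ℝ) < 1 - q).ne'
          field_simp
        calc ENNReal.ofReal (R ^ c) * ENNReal.ofReal R
            = ENNReal.ofReal (R ^ c * R) := (ENNReal.ofReal_mul (by positivity)).symm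
          _ ≤ ENNReal.ofReal (((k:ℝ) + 2) ^ ((n:ℝ) + 1)) := ENNReal.ofReal_le_ofReal hreal
          _ = ENNReal.ofReal (gg n q k ^ (1/(1-q))) := by rw [hgg]
          _ = ENNReal.ofReal (gg n q k) ^ (1/(1-q)) :=
              (ENNReal.ofReal_rpow_of_pos (gg_pos k)).symm
          _ = (ENNReal.ofReal (gg n q k) ^ (1/q)) ^ (q/(1-q)) := by
              rw [← ENNReal.rpow_mul]
              congr 1
              have h1q : (1:ℝ) - q ≠ 0 := (by linarith : (0:ℝ) < 1 - q).ne'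
              field_simp
          _ ≤ κ ^ (q/(1-q)) :=
              ENNReal.rpow_le_rpow hlb (div_nonneg hq0.le (by linarith))
      have ha0 : ENNReal.ofReal (R ^ c) ≠ 0 :=
        (ENNReal.ofReal_pos.mpr (Real.rpow_pos_of_pos hR0 c)).ne'
      have hb0 : ENNReal.ofReal R ≠ 0 := (ENNReal.ofReal_pos.mpr hR0).ne'
      rw [ENNReal.le_div_iff_mul_le (Or.inl hb0) (Or.inl ENNReal.ofReal_ne_top), one_mul,
        ENNReal.le_div_iff_mul_le (Or.inl ha0) (Or.inl ENNReal.ofReal_ne_top), mul_comm]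
      exact h1
    apply top_unique
    calc (⊤:ℝ≥0∞) = volume (Ioi (2:ℝ)) := Real.volume_Ioi.symm
      _ = ∫⁻ _ in Ioi (2:ℝ), 1 := (setLIntegral_one _).symm
      _ ≤ ∫⁻ R in Ioi (2:ℝ),
          kappaRiesz n α q (sig n q α) (ball (0 : Esp n) R) ^ (q / (1 - q))
            / ENNReal.ofReal (R ^ c) / ENNReal.ofReal R :=
          setLIntegral_mono' measurableSet_Ioi key
      _ ≤ ∫⁻ R in Ioi (1:ℝ),
          kappaRiesz n α q (sig n q α) (ball (0 : Esp n) R) ^ (q / (1 - q))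
            / ENNReal.ofReal (R ^ c) / ENNReal.ofReal R :=
          lintegral_mono_set (Ioi_subset_Ioi one_le_two)
end
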